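/- arXiv:2009.10696 — 5 statements merged into one kernel-verified Lean document; each statement's English description precedes it below -/
import Mathlib

section
/- Let H = (V, E) be a finite connected graph with injective edge weights b : E → [0, ∞), and let T be its unique minimum spanning tree. Fix u ∈ [0, ∞), let E^u = {e ∈ E : b(e) ≤ u}, and let C be a connected component of the graph (V, E^u). Then every path in T joining two vertices of C lies entirely inside C, and the set of edges of T having both endpoints in C is exactly the edge set of the minimum spanning tree of C with respect to the restriction of b to the edges of C. -/
open scoped Classical
set_option linter.unusedSectionVars false
set_option maxHeartbeats 1000000

noncomputable section

variable {V : Type} [Fintype V] [DecidableEq V]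

/-- `T` is a spanning tree of the graph `G` (on the same vertex set). -/
def IsSpanningTree (G T : SimpleGraph V) : Prop :=
  T ≤ G ∧ T.Connected ∧ T.IsAcyclic

/-- The total weight `Σ_{e ∈ T} b(e)` of the edges of `T`. -/
def treeWeight (T : SimpleGraph V) (b : Sym2 V → ℝ) : ℝ :=
  ∑ e : Sym2 V, if e ∈ T.edgeSet then b e else 0

/-- The percolated graph `(V, E^u)` keeping only the edges of `G` of weight at most `u`. -/
def percGraph (G : SimpleGraph V) (b : Sym2 V → ℝ) (u : ℝ) : SimpleGraph V where
  Adj x y := G.Adj x y ∧ b s(x, y) ≤ u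
  symm := by
    constructor
    intro x y h
    refine ⟨h.1.symm, ?_⟩
    rw [Sym2.eq_swap]
    exact h.2
  loopless := ⟨fun x h => h.1.ne rfl⟩

/-- The restriction of `T` to the connected component `C` of `Gu`: keep exactly the edges of
`T` with both endpoints in `C`. -/
def restrictToComp (T Gu : SimpleGraph V) (C : Gu.ConnectedComponent) : SimpleGraph V where
  Adj x y := T.Adj x y ∧ Gu.connectedComponentMk x = C ∧ Gu.connectedComponentMk y = C
  symm := ⟨fun x y h => ⟨h.1.symm, h.2.2, h.2.1⟩⟩
  loopless := ⟨fun x h => h.1.ne rfl⟩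

/-- `S` is a spanning tree of the connected component `C` of `Gu`: it is a subgraph of `Gu`,
acyclic, all its edges have both endpoints in `C`, and it connects any two vertices of `C`. -/
def IsSpanningTreeOn (Gu S : SimpleGraph V) (C : Gu.ConnectedComponent) : Prop :=
  S ≤ Gu ∧ S.IsAcyclic ∧
  (∀ x y : V, S.Adj x y → Gu.connectedComponentMk x = C ∧ Gu.connectedComponentMk y = C) ∧
  (∀ x y : V, Gu.connectedComponentMk x = C → Gu.connectedComponentMk y = C → S.Reachable x y)


set_option linter.unusedSectionVars false
set_option maxHeartbeats 1000000

open SimpleGraph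



private lemma aux_reach_trans {A B : SimpleGraph V}
    (h : ∀ x y : V, A.Adj x y → B.Reachable x y) {x y : V} (hr : A.Reachable x y) :
    B.Reachable x y := by
  obtain ⟨w⟩ := hr
  induction w with
  | nil => exact Reachable.refl _
  | cons ha _ ih => exact (h _ _ ha).trans ih

private lemma aux_crossing {W : SimpleGraph V} (P : V → Prop) :
    ∀ {x y : V}, W.Walk x y → P x → ¬ P y →
      ∃ c c' : V, W.Adj c c' ∧ P c ∧ ¬ P c' := by
  intro x y w
  induction w with
  | nil => intro hx hy; exact absurd hx hy
  | @cons a bb c ha _ ih =>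
    intro hx hy
    by_cases hb : P bb
    · exact ih hb hy
    · exact ⟨a, bb, ha, hx, hb⟩

private lemma aux_acyclic_mono {A B : SimpleGraph V} (hAB : A ≤ B) (hB : B.IsAcyclic) :
    A.IsAcyclic := fun _ c hc => hB (c.mapLe hAB) (hc.mapLe hAB)

private lemma aux_tw_mono {A B G : SimpleGraph V} (hAB : A ≤ B) (hBG : B ≤ G)
    {b : Sym2 V → ℝ} (hb : ∀ e ∈ G.edgeSet, 0 ≤ b e) :
    treeWeight A b ≤ treeWeight B b := by
  apply Finset.sum_le_sum
  intro e _
  by_cases hA : e ∈ A.edgeSet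
  · simp [hA, SimpleGraph.edgeSet_mono hAB hA]
  · simp only [hA, if_false]
    split_ifs with hBe
    · exact hb e (SimpleGraph.edgeSet_mono hBG hBe)
    · exact le_refl _

private lemma aux_tw_split {X Y Z : SimpleGraph V} (b : Sym2 V → ℝ)
    (h : ∀ g : Sym2 V, g ∈ Z.edgeSet ↔ g ∈ X.edgeSet ∨ g ∈ Y.edgeSet)
    (hd : ∀ g : Sym2 V, g ∈ X.edgeSet → g ∉ Y.edgeSet) :
    treeWeight Z b = treeWeight X b + treeWeight Y b := by
  unfold treeWeight
  rw [← Finset.sum_add_distrib]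
  apply Finset.sum_congr rfl
  intro g _
  by_cases hx : g ∈ X.edgeSet
  · simp [hx, hd g hx, (h g).2 (Or.inl hx)]
  · by_cases hy : g ∈ Y.edgeSet
    · simp [hx, hy, (h g).2 (Or.inr hy)]
    · have hz : g ∉ Z.edgeSet := fun hz => ((h g).1 hz).elim hx hy
      simp [hx, hy, hz]

private lemma aux_tw_swap {T T'' : SimpleGraph V} (b : Sym2 V → ℝ) {e f : Sym2 V}
    (hef : e ≠ f) (heT : e ∈ T.edgeSet) (hfT : f ∉ T.edgeSet)
    (h : ∀ g : Sym2 V, g ∈ T''.edgeSet ↔ (g ∈ T.edgeSet ∧ g ≠ e) ∨ g = f) :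
    treeWeight T'' b = treeWeight T b - b e + b f := by
  unfold treeWeight
  have hsub : ({e, f} : Finset (Sym2 V)) ⊆ Finset.univ := Finset.subset_univ _
  rw [← Finset.sum_sdiff hsub, ← Finset.sum_sdiff hsub, Finset.sum_pair hef,
    Finset.sum_pair hef]
  have he'' : e ∉ T''.edgeSet := fun hc => ((h e).1 hc).elim (fun q => q.2 rfl) hef
  have hf'' : f ∈ T''.edgeSet := (h f).2 (Or.inr rfl)
  have hcongr : ∑ g ∈ Finset.univ \ {e, f}, (if g ∈ T''.edgeSet then b g else 0) =
      ∑ g ∈ Finset.univ \ {e, f}, (if g ∈ T.edgeSet then b g else 0) := by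
    apply Finset.sum_congr rfl
    intro g hg
    simp only [Finset.mem_sdiff, Finset.mem_insert, Finset.mem_singleton, not_or] at hg
    have : g ∈ T''.edgeSet ↔ g ∈ T.edgeSet := by
      rw [h g]
      simp [hg.2.1, hg.2.2]
    rw [if_congr this rfl rfl]
  rw [hcongr]
  simp only [he'', hf'', heT, hfT, if_true, if_false]
  ring

private lemma aux_exists_tree {G : SimpleGraph V} (h : G.Connected) :
    ∃ T : SimpleGraph V, T ≤ G ∧ T.Connected ∧ T.IsAcyclic := by
  have main : ∀ n : ℕ, ∀ G : SimpleGraph V, G.edgeSet.ncard ≤ n → G.Connected →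
      ∃ T : SimpleGraph V, T ≤ G ∧ T.Connected ∧ T.IsAcyclic := by
    intro n
    induction n with
    | zero =>
      intro G hn hG
      refine ⟨G, le_refl _, hG, ?_⟩
      have hzero : G.edgeSet.ncard = 0 := Nat.le_zero.mp hn
      have hb : G = ⊥ := by
        rw [← SimpleGraph.edgeSet_eq_empty]
        exact (Set.ncard_eq_zero (Set.toFinite _)).mp hzero
      rw [hb]
      exact SimpleGraph.isAcyclic_bot
    | succ n ih =>
      intro G hn hG
      by_cases hac : G.IsAcyclic
      · exact ⟨G, le_refl _, hG, hac⟩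
      · rw [SimpleGraph.IsAcyclic] at hac
        push_neg at hac
        obtain ⟨v, c, hc⟩ := hac
        cases c with
        | nil => exact absurd rfl hc.ne_nil
        | @cons _ w _ hadj q =>
          have hmem : s(v, w) ∈ (Walk.cons hadj q).edges := by simp
          have hnb : ¬ G.IsBridge s(v, w) := by
            rw [SimpleGraph.isBridge_iff_adj_and_forall_cycle_notMem ((SimpleGraph.mem_edgeSet _).mpr hadj)]
            push_neg
            exact ⟨v, Walk.cons hadj q, hc, hmem⟩
          have hreach : (G \ SimpleGraph.fromEdgeSet {s(v, w)}).Reachable v w := by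
            by_contra hr
            exact hnb (SimpleGraph.isBridge_iff.mpr hr)
          set G' := G \ SimpleGraph.fromEdgeSet {s(v, w)} with hG'
          have hG'le : G' ≤ G := sdiff_le
          have hG'conn : G'.Connected := by
            have : Nonempty V := hG.nonempty
            refine ⟨fun a bb => ?_⟩
            refine aux_reach_trans (fun x y hxy => ?_) (hG.preconnected a bb)
            by_cases hse : s(x, y) = s(v, w)
            · rcases Sym2.eq_iff.mp hse with ⟨rfl, rfl⟩ | ⟨rfl, rfl⟩
              · exact hreach
              · exact hreach.symm
            · refine SimpleGraph.Adj.reachable ?_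
              rw [SimpleGraph.sdiff_adj]
              exact ⟨hxy, fun hcon => hse ((SimpleGraph.fromEdgeSet_adj _).mp hcon).1⟩
          have hE : G'.edgeSet = G.edgeSet \ {s(v, w)} := by
            rw [hG', SimpleGraph.edgeSet_sdiff, SimpleGraph.edgeSet_fromEdgeSet,
              SimpleGraph.edgeSet_sdiff_sdiff_isDiag]
          have hcard : G'.edgeSet.ncard ≤ n := by
            have hlt : G'.edgeSet.ncard < G.edgeSet.ncard := by
              rw [hE]
              exact Set.ncard_diff_singleton_lt_of_mem hadj (Set.toFinite _)
            omega
          obtain ⟨T, hT1, hT2, hT3⟩ := ih G' hcard hG'conn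
          exact ⟨T, hT1.trans hG'le, hT2, hT3⟩
  exact main _ G (le_refl _) h

private lemma aux_two_sided {A B : SimpleGraph V} {a a' : V}
    (h : ∀ s t : V, A.Adj s t → B.Reachable s t ∨ (s = a ∧ t = a') ∨ (s = a' ∧ t = a)) :
    ∀ {v w : V}, A.Walk v w → (B.Reachable w a ∨ B.Reachable w a') →
      B.Reachable v a ∨ B.Reachable v a' := by
  intro v w walk
  induction walk with
  | nil => exact id
  | cons hst q ih =>
    intro hw
    rcases h _ _ hst with h1 | ⟨rfl, rfl⟩ | ⟨rfl, rfl⟩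
    · rcases ih hw with h2 | h2
      · exact Or.inl (h1.trans h2)
      · exact Or.inr (h1.trans h2)
    · exact Or.inl (Reachable.refl _)
    · exact Or.inr (Reachable.refl _)




private lemma aux_key (G : SimpleGraph V) (hG : G.Connected) (b : Sym2 V → ℝ)
    (hb_nonneg : ∀ e ∈ G.edgeSet, 0 ≤ b e)
    (T : SimpleGraph V)
    (hT : IsSpanningTree G T ∧ ∀ T', IsSpanningTree G T' → treeWeight T b ≤ treeWeight T' b)
    (u : ℝ) {x y : V} (hxy : (percGraph G b u).Reachable x y)
    {p : T.Walk x y} (hp : p.IsPath) :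
    ∀ e ∈ p.edges, b e ≤ u := by
  obtain ⟨⟨hTle, hTconn, hTac⟩, hmin⟩ := hT
  intro e
  induction e using Sym2.ind with
  | _ a a' =>
  intro he
  by_contra hub
  push_neg at hub
  have hadj : T.Adj a a' := p.adj_of_mem_edges he
  set T' := T \ SimpleGraph.fromEdgeSet {s(a, a')} with hT'def
  have hT'le : T' ≤ T := sdiff_le
  have hT'E : T'.edgeSet = T.edgeSet \ {s(a, a')} := by
    rw [hT'def, SimpleGraph.edgeSet_sdiff, SimpleGraph.edgeSet_fromEdgeSet,
      SimpleGraph.edgeSet_sdiff_sdiff_isDiag]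
  have hT'adj : ∀ s t : V, T.Adj s t → s(s, t) ≠ s(a, a') → T'.Adj s t := by
    intro s t hst hne
    rw [hT'def, SimpleGraph.sdiff_adj]
    exact ⟨hst, fun hcon => hne ((SimpleGraph.fromEdgeSet_adj _).mp hcon).1⟩
  have claimA : ∀ v : V, T'.Reachable v a ∨ T'.Reachable v a' := by
    intro v
    obtain ⟨w⟩ := hTconn.preconnected v a
    refine aux_two_sided (fun s t hst => ?_) w (Or.inl (Reachable.refl _))
    by_cases hse : s(s, t) = s(a, a')
    · rcases Sym2.eq_iff.mp hse with ⟨rfl, rfl⟩ | ⟨rfl, rfl⟩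
      · exact Or.inr (Or.inl ⟨rfl, rfl⟩)
      · exact Or.inr (Or.inr ⟨rfl, rfl⟩)
    · exact Or.inl (hT'adj s t hst hse).reachable
  have notRR : ¬ T'.Reachable a a' := by
    have hbr := SimpleGraph.isAcyclic_iff_forall_adj_isBridge.mp hTac hadj
    rw [SimpleGraph.isBridge_iff] at hbr
    exact hbr
  have claimB : ¬ T'.Reachable x y := by
    intro hr
    obtain ⟨q0⟩ := hr
    obtain ⟨q, hq⟩ := q0.toPath
    have hqT : ∀ g ∈ q.edges, g ∈ T.edgeSet := fun g hg =>
      SimpleGraph.edgeSet_mono hT'le (q.edges_subset_edgeSet hg)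
    have huniq := hTac.path_unique ⟨q.transfer T hqT, hq.transfer hqT⟩ ⟨p, hp⟩
    have hedges : (q.transfer T hqT).edges = p.edges := by
      rw [Subtype.ext_iff] at huniq
      simp only at huniq
      rw [huniq]
    rw [Walk.edges_transfer] at hedges
    have hmem : s(a, a') ∈ q.edges := by rw [hedges]; exact he
    have : s(a, a') ∈ T'.edgeSet := q.edges_subset_edgeSet hmem
    rw [hT'E] at this
    exact this.2 rfl
  have main : ∀ a₁ a₂ : V, s(a₁, a₂) = s(a, a') → T'.Reachable x a₁ → T'.Reachable y a₂ →
      False := by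
    intro a₁ a₂ hee hx1 hy2
    have hr12 : ¬ T'.Reachable a₁ a₂ := by
      rcases Sym2.eq_iff.mp hee with ⟨rfl, rfl⟩ | ⟨rfl, rfl⟩
      · exact notRR
      · exact fun hr => notRR hr.symm
    obtain ⟨w⟩ := hxy
    have hQy : ¬ T'.Reachable y a₁ := fun hy1 => hr12 (hy1.symm.trans hy2)
    obtain ⟨c, c', hcc, hQc, hQc'⟩ := aux_crossing (fun v => T'.Reachable v a₁) w hx1 hQy
    have hcc' : G.Adj c c' ∧ b s(c, c') ≤ u := hcc
    have hfu : b s(c, c') ≤ u := hcc'.2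
    have hfe : s(c, c') ≠ s(a, a') := by
      intro hfe'
      rw [hfe'] at hfu
      linarith
    have hc'a2 : T'.Reachable c' a₂ := by
      rcases claimA c' with h1 | h1 <;> rcases Sym2.eq_iff.mp hee with ⟨rfl, rfl⟩ | ⟨rfl, rfl⟩
      · exact absurd h1 hQc'
      · exact h1
      · exact h1
      · exact absurd h1 hQc'
    have hca1 : T'.Reachable c a₁ := hQc
    have hfT : s(c, c') ∉ T.edgeSet := by
      intro hfT'
      have hacc : T'.Adj c c' := hT'adj c c' ((SimpleGraph.mem_edgeSet _).mp hfT') hfe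
      exact hQc' (hacc.symm.reachable.trans hQc)
    set T'' := T' ⊔ SimpleGraph.fromEdgeSet {s(c, c')} with hT''def
    have hle1 : T' ≤ T'' := le_sup_left
    have hT''le : T'' ≤ G := by
      apply sup_le (hT'le.trans hTle)
      intro x' y' hxy'
      rw [SimpleGraph.fromEdgeSet_adj] at hxy'
      have heq : s(x', y') = s(c, c') := hxy'.1
      rcases Sym2.eq_iff.mp heq with ⟨rfl, rfl⟩ | ⟨rfl, rfl⟩
      · exact hcc'.1
      · exact hcc'.1.symm
    have hstep : T''.Reachable a₂ a₁ := by
      have h2' : (SimpleGraph.fromEdgeSet {s(c, c')}).Adj c' c := by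
        rw [SimpleGraph.fromEdgeSet_adj]
        refine ⟨?_, hcc'.1.ne.symm⟩
        rw [Sym2.eq_swap]
        rfl
      have h2 : T''.Adj c' c := (SimpleGraph.sup_adj _ _ _ _).mpr (Or.inr h2')
      exact ((hc'a2.symm.mono hle1).trans h2.reachable).trans (hca1.mono hle1)
    have hall : ∀ v : V, T''.Reachable v a₁ := by
      intro v
      rcases claimA v with h1 | h1 <;>
        rcases Sym2.eq_iff.mp hee with ⟨rfl, rfl⟩ | ⟨rfl, rfl⟩
      · exact h1.mono hle1
      · exact (h1.mono hle1).trans hstep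
      · exact (h1.mono hle1).trans hstep
      · exact h1.mono hle1
    have hT''conn : T''.Connected := by
      have : Nonempty V := hG.nonempty
      exact ⟨fun v w => (hall v).trans (hall w).symm⟩
    have hT''E : ∀ g : Sym2 V, g ∈ T''.edgeSet ↔
        (g ∈ T.edgeSet ∧ g ≠ s(a, a')) ∨ g = s(c, c') := by
      intro g
      rw [hT''def, SimpleGraph.edgeSet_sup, Set.mem_union, hT'E,
        SimpleGraph.edgeSet_fromEdgeSet]
      constructor
      · rintro (⟨h1, h2⟩ | ⟨h1, _⟩)
        · exact Or.inl ⟨h1, h2⟩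
        · exact Or.inr h1
      · rintro (⟨h1, h2⟩ | rfl)
        · exact Or.inl ⟨h1, h2⟩
        · refine Or.inr ⟨rfl, ?_⟩
          simp [Sym2.isDiag_iff_proj_eq, hcc'.1.ne]
    have htw : treeWeight T'' b = treeWeight T b - b s(a, a') + b s(c, c') :=
      aux_tw_swap b (Ne.symm hfe) ((SimpleGraph.mem_edgeSet _).mpr hadj) hfT hT''E
    obtain ⟨T₃, h31, h32, h33⟩ := aux_exists_tree hT''conn
    have h5 := hmin T₃ ⟨h31.trans hT''le, h32, h33⟩
    have h6 := aux_tw_mono h31 hT''le hb_nonneg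
    linarith
  rcases claimA x with hx1 | hx1 <;> rcases claimA y with hy1 | hy1
  · exact claimB (hx1.trans hy1.symm)
  · exact main a a' rfl hx1 hy1
  · exact main a' a Sym2.eq_swap hx1 hy1
  · exact claimB (hx1.trans hy1.symm)



private lemma percGraph_le {G : SimpleGraph V} {b : Sym2 V → ℝ} {u : ℝ} :
    percGraph G b u ≤ G := by
  intro v w h
  exact h.1

private lemma restrictToComp_adj {T Gu : SimpleGraph V} {C : Gu.ConnectedComponent} {x y : V} :
    (restrictToComp T Gu C).Adj x y ↔
      T.Adj x y ∧ Gu.connectedComponentMk x = C ∧ Gu.connectedComponentMk y = C := Iff.rfl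

private def restOut (T Gu : SimpleGraph V) (C : Gu.ConnectedComponent) : SimpleGraph V where
  Adj x y := T.Adj x y ∧ ¬(Gu.connectedComponentMk x = C ∧ Gu.connectedComponentMk y = C)
  symm := ⟨fun x y h => ⟨h.1.symm, fun hc => h.2 ⟨hc.2, hc.1⟩⟩⟩
  loopless := ⟨fun x h => h.1.ne rfl⟩

private lemma restOut_adj {T Gu : SimpleGraph V} {C : Gu.ConnectedComponent} {x y : V} :
    (restOut T Gu C).Adj x y ↔
      T.Adj x y ∧ ¬(Gu.connectedComponentMk x = C ∧ Gu.connectedComponentMk y = C) := Iff.rfl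


/-- Let `T` be the minimum spanning tree of a finite connected graph `G` with
injective nonnegative edge weights `b`, fix `u ≥ 0` and a connected component `C` of the
percolated graph `(V, E^u)`. Then every path in `T` joining two vertices of `C` stays inside
`C`, and the edges of `T` with both endpoints in `C` form exactly the minimum spanning tree of
the component `C` with respect to the restriction of `b`. -/
theorem mst_restriction_to_percolation_component (G : SimpleGraph V) (hG : G.Connected)
    (b : Sym2 V → ℝ)
    (hb_nonneg : ∀ e ∈ G.edgeSet, 0 ≤ b e)
    (hb_inj : ∀ e ∈ G.edgeSet, ∀ f ∈ G.edgeSet, b e = b f → e = f)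
    (T : SimpleGraph V)
    (hT : IsSpanningTree G T ∧ ∀ T', IsSpanningTree G T' → treeWeight T b ≤ treeWeight T' b)
    (u : ℝ) (hu : 0 ≤ u)
    (C : (percGraph G b u).ConnectedComponent) :
    (∀ x y : V, (percGraph G b u).connectedComponentMk x = C →
        (percGraph G b u).connectedComponentMk y = C →
        ∀ p : T.Walk x y, p.IsPath →
          ∀ z ∈ p.support, (percGraph G b u).connectedComponentMk z = C) ∧
    IsSpanningTreeOn (percGraph G b u) (restrictToComp T (percGraph G b u) C) C ∧
    (∀ S : SimpleGraph V, IsSpanningTreeOn (percGraph G b u) S C →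
      treeWeight (restrictToComp T (percGraph G b u) C) b ≤ treeWeight S b) := by
  have hTle : T ≤ G := hT.1.1
  have hTconn := hT.1.2.1
  have hTac := hT.1.2.2
  have part1 : ∀ x y : V, (percGraph G b u).connectedComponentMk x = C →
      (percGraph G b u).connectedComponentMk y = C →
      ∀ p : T.Walk x y, p.IsPath → ∀ z ∈ p.support,
        (percGraph G b u).connectedComponentMk z = C := by
    intro x y hx hy p hp z hz
    have hxy : (percGraph G b u).Reachable x y :=
      SimpleGraph.ConnectedComponent.eq.mp (hx.trans hy.symm)
    have hedges := aux_key G hG b hb_nonneg T hT u hxy hp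
    have hq_edges : ∀ e ∈ (p.takeUntil z hz).edges, e ∈ (percGraph G b u).edgeSet := by
      intro e
      induction e using Sym2.ind with
      | _ s t =>
      intro he
      have heP : s(s, t) ∈ p.edges := p.edges_takeUntil_subset hz he
      exact (SimpleGraph.mem_edgeSet _).mpr ⟨hTle (p.adj_of_mem_edges heP), hedges _ heP⟩
    have hreach : (percGraph G b u).Reachable x z :=
      ⟨(p.takeUntil z hz).transfer (percGraph G b u) hq_edges⟩
    rw [← hx]
    exact (SimpleGraph.ConnectedComponent.eq.mpr hreach).symm
  have hRC_le_T : restrictToComp T (percGraph G b u) C ≤ T := by intro v w h; exact h.1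
  have hRC_adjC : ∀ x y : V, (restrictToComp T (percGraph G b u) C).Adj x y →
      (percGraph G b u).connectedComponentMk x = C ∧
        (percGraph G b u).connectedComponentMk y = C :=
    fun x y h => ⟨h.2.1, h.2.2⟩
  have hRC_le_Gu : restrictToComp T (percGraph G b u) C ≤ percGraph G b u := by
    intro v w h
    have h' : T.Adj v w ∧ (percGraph G b u).connectedComponentMk v = C ∧
        (percGraph G b u).connectedComponentMk w = C := h
    have hreach : (percGraph G b u).Reachable v w :=
      SimpleGraph.ConnectedComponent.eq.mp (h'.2.1.trans h'.2.2.symm)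
    have hsingle : (SimpleGraph.Path.singleton h'.1 : T.Walk v w).IsPath :=
      (SimpleGraph.Path.singleton h'.1).2
    have hmem : s(v, w) ∈ (SimpleGraph.Path.singleton h'.1 : T.Walk v w).edges := by
      simp [SimpleGraph.Path.singleton]
    have hbu := aux_key G hG b hb_nonneg T hT u hreach hsingle s(v, w) hmem
    exact ⟨hTle h'.1, hbu⟩
  have hRC_conn : ∀ x y : V, (percGraph G b u).connectedComponentMk x = C →
      (percGraph G b u).connectedComponentMk y = C →
      (restrictToComp T (percGraph G b u) C).Reachable x y := by
    intro x y hx hy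
    obtain ⟨p0⟩ := hTconn.preconnected x y
    obtain ⟨p, hp⟩ := p0.toPath
    have hpe : ∀ e ∈ p.edges, e ∈ (restrictToComp T (percGraph G b u) C).edgeSet := by
      intro e
      induction e using Sym2.ind with
      | _ s t =>
      intro he
      have hadj : T.Adj s t := p.adj_of_mem_edges he
      have hs := part1 x y hx hy p hp s (p.fst_mem_support_of_mem_edges he)
      have ht := part1 x y hx hy p hp t (p.snd_mem_support_of_mem_edges he)
      exact (SimpleGraph.mem_edgeSet _).mpr ⟨hadj, hs, ht⟩
    exact ⟨p.transfer (restrictToComp T (percGraph G b u) C) hpe⟩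
  refine ⟨part1, ⟨hRC_le_Gu, aux_acyclic_mono hRC_le_T hTac, hRC_adjC, hRC_conn⟩, ?_⟩
  intro S hS
  obtain ⟨hSle, hSac, hSadjC, hSconn⟩ := hS
  have hOut_le_T : restOut T (percGraph G b u) C ≤ T := by intro v w h; exact h.1
  have hsplit1 : treeWeight T b = treeWeight (restOut T (percGraph G b u) C) b +
      treeWeight (restrictToComp T (percGraph G b u) C) b := by
    apply aux_tw_split
    · intro g
      induction g using Sym2.ind with
      | _ s t =>
      simp only [SimpleGraph.mem_edgeSet, restOut_adj, restrictToComp_adj]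
      constructor
      · intro h
        by_cases hc : (percGraph G b u).connectedComponentMk s = C ∧
            (percGraph G b u).connectedComponentMk t = C
        · exact Or.inr ⟨h, hc.1, hc.2⟩
        · exact Or.inl ⟨h, hc⟩
      · rintro (⟨h, _⟩ | ⟨h, _, _⟩) <;> exact h
    · intro g
      induction g using Sym2.ind with
      | _ s t =>
      simp only [SimpleGraph.mem_edgeSet, restOut_adj, restrictToComp_adj]
      rintro ⟨_, hnc⟩ ⟨_, h1, h2⟩
      exact hnc ⟨h1, h2⟩
  have hsplit2 : treeWeight (restOut T (percGraph G b u) C ⊔ S) b =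
      treeWeight (restOut T (percGraph G b u) C) b + treeWeight S b := by
    apply aux_tw_split
    · intro g
      rw [SimpleGraph.edgeSet_sup]
      exact Set.mem_union _ _ _
    · intro g
      induction g using Sym2.ind with
      | _ s t =>
      simp only [SimpleGraph.mem_edgeSet, restOut_adj]
      rintro ⟨_, hnc⟩ hSst
      exact hnc (hSadjC s t hSst)
  have hconn' : (restOut T (percGraph G b u) C ⊔ S).Connected := by
    have : Nonempty V := hG.nonempty
    refine ⟨fun v w => ?_⟩
    refine aux_reach_trans (fun x y hxy => ?_) (hTconn.preconnected v w)
    by_cases hc : (percGraph G b u).connectedComponentMk x = C ∧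
        (percGraph G b u).connectedComponentMk y = C
    · exact (hSconn x y hc.1 hc.2).mono le_sup_right
    · exact SimpleGraph.Adj.reachable
        ((SimpleGraph.sup_adj _ _ _ _).mpr (Or.inl ⟨hxy, hc⟩))
  have hle' : restOut T (percGraph G b u) C ⊔ S ≤ G :=
    sup_le (hOut_le_T.trans hTle) (hSle.trans percGraph_le)
  obtain ⟨T₃, h31, h32, h33⟩ := aux_exists_tree hconn'
  have h5 := hT.2 T₃ ⟨h31.trans hle', h32, h33⟩
  have h6 := aux_tw_mono h31 hle' hb_nonneg
  linarith

end
end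

section
/- For every finite simple graph H with at least one vertex, 1 + LP(H) ≤ 8 · (diam(H) + 1) · (maxsurplus(H) + 1). -/
open scoped Classical

noncomputable section

variable {V : Type} [Fintype V] [DecidableEq V]

/-- `LP H`: the maximal number of edges of a self-avoiding path in `H`. -/
def longestPath (H : SimpleGraph V) : ℕ :=
  sSup {k : ℕ | ∃ (u v : V) (p : H.Walk u v), p.IsPath ∧ p.length = k}

/-- `diam H`: the maximum, over connected components, of the diameter of the component with
respect to the graph distance (expressed as the largest graph distance between two vertices
lying in a common component). -/
def graphDiam (H : SimpleGraph V) : ℕ :=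
  sSup {k : ℕ | ∃ u v : V, H.Reachable u v ∧ H.dist u v = k}

/-- The number of vertices of the connected component `c` of `H`. -/
def compVertCount (H : SimpleGraph V) (c : H.ConnectedComponent) : ℕ :=
  (Finset.univ.filter fun v : V => H.connectedComponentMk v = c).card

/-- The number of edges of the connected component `c` of `H`. -/
def compEdgeCount (H : SimpleGraph V) (c : H.ConnectedComponent) : ℕ :=
  (Finset.univ.filter fun e : Sym2 V =>
    e ∈ H.edgeSet ∧ ∀ x ∈ e, H.connectedComponentMk x = c).card

/-- `maxsurplus H`: the maximum over connected components `C` of `H` of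
`|E(C)| − |V(C)| + 1` (computed in `ℕ` as `|E(C)| + 1 − |V(C)|`, which agrees with the surplus
since every connected component satisfies `|E(C)| ≥ |V(C)| − 1`). -/
def maxSurplus (H : SimpleGraph V) : ℕ :=
  sSup {s : ℕ | ∃ c : H.ConnectedComponent, s = compEdgeCount H c + 1 - compVertCount H c}

/-- `getVert` of a path is injective on indices up to the length. -/
lemma path_getVert_inj {H : SimpleGraph V} {u v : V} (p : H.Walk u v) (hp : p.IsPath) :
    ∀ i ≤ p.length, ∀ j ≤ p.length, p.getVert i = p.getVert j → i = j := by
  induction p with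
  | nil => intro i hi j hj _; simp at hi hj; omega
  | @cons a b w h q ih =>
    rw [SimpleGraph.Walk.cons_isPath_iff] at hp
    intro i hi j hj hij
    match i, j with
    | 0, 0 => rfl
    | 0, j + 1 =>
      exfalso
      apply hp.2
      rw [SimpleGraph.Walk.getVert_zero] at hij
      rw [SimpleGraph.Walk.getVert_cons_succ] at hij
      exact SimpleGraph.Walk.mem_support_iff_exists_getVert.mpr
        ⟨j, hij.symm, by simpa using hj⟩
    | i + 1, 0 =>
      exfalso
      apply hp.2
      rw [SimpleGraph.Walk.getVert_zero] at hij
      rw [SimpleGraph.Walk.getVert_cons_succ] at hij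
      exact SimpleGraph.Walk.mem_support_iff_exists_getVert.mpr
        ⟨i, hij, by simpa using hi⟩
    | i + 1, j + 1 =>
      rw [SimpleGraph.Walk.getVert_cons_succ, SimpleGraph.Walk.getVert_cons_succ] at hij
      have := ih hp.1 i (by simpa using hi) j (by simpa using hj) hij
      omega

/-- Existence of a "parent" on a shortest path. -/
lemma exists_parent (H : SimpleGraph V) {u x : V} (h : H.Reachable u x)
    (hx : H.dist u x ≠ 0) :
    ∃ y, H.Adj y x ∧ H.dist u y + 1 = H.dist u x := by
  obtain ⟨p, hplen⟩ := h.exists_walk_length_eq_dist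
  have hne : x ≠ u := by
    rintro rfl
    exact hx (SimpleGraph.dist_self)
  obtain ⟨y, hadj, q, hq⟩ := SimpleGraph.Walk.exists_eq_cons_of_ne hne p.reverse
  have hqlen : q.length + 1 = H.dist u x := by
    have := congrArg SimpleGraph.Walk.length hq
    simpa [hplen] using this.symm
  have h1 : H.dist u y ≤ q.length := by
    simpa using SimpleGraph.dist_le q.reverse
  have h2 : H.dist u x ≤ H.dist u y + 1 := by
    obtain ⟨w, hwlen⟩ := (q.reverse.reachable).exists_walk_length_eq_dist
    have := SimpleGraph.dist_le (w.concat hadj.symm)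
    simpa [SimpleGraph.Walk.length_concat, hwlen] using this
  exact ⟨y, hadj.symm, by omega⟩

/-- Arithmetic: a "first down then up" unimodal sequence bounded by `D` has length `≤ 2D`. -/
lemma seq_bound (f : ℕ → ℕ) (len D : ℕ)
    (hb : ∀ t, t ≤ len → f t ≤ D)
    (hstep : ∀ t, t < len → f (t + 1) = f t + 1 ∨ f t = f (t + 1) + 1)
    (hmono : ∀ t, t + 1 < len → f (t + 1) = f t + 1 → f (t + 2) = f (t + 1) + 1) :
    len ≤ 2 * D := by
  by_cases hup : ∃ t, t < len ∧ f (t + 1) = f t + 1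
  · set m := Nat.find hup with hm
    have hmspec := Nat.find_spec hup
    have hdown : ∀ t, t < m → f t = f (t + 1) + 1 := by
      intro t ht
      have htlen : t < len := lt_trans ht hmspec.1
      rcases hstep t htlen with h' | h'
      · exact absurd ⟨htlen, h'⟩ (Nat.find_min hup ht)
      · exact h'
    have claim1 : ∀ t, t ≤ m → f t + t = f 0 := by
      intro t ht
      induction t with
      | zero => rfl
      | succ k ihk =>
        have := hdown k (by omega)
        have := ihk (by omega)
        omega
    have hmD : m ≤ D := by
      have := claim1 m le_rfl
      have := hb 0 (by omega)
      omega
    have hupall : ∀ k, m + k < len → f (m + k + 1) = f (m + k) + 1 := by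
      intro k
      induction k with
      | zero => intro _; simpa using hmspec.2
      | succ j ihj =>
        intro hjl
        have h1 := ihj (by omega)
        have := hmono (m + j) (by omega) h1
        have he : m + (j + 1) + 1 = m + j + 2 := by omega
        rw [he]
        have he2 : m + (j + 1) = m + j + 1 := by omega
        rw [he2]
        exact this
    have claim2 : ∀ k, m + k ≤ len → f (m + k) = f m + k := by
      intro k
      induction k with
      | zero => intro _; simp
      | succ j ihj =>
        intro hjl
        have h1 := ihj (by omega)
        have h2 := hupall j (by omega)
        rw [show m + (j + 1) = m + j + 1 from rfl]
        omega
    have hmlen : m ≤ len := le_of_lt hmspec.1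
    have hc2 := claim2 (len - m) (by omega)
    rw [show m + (len - m) = len by omega] at hc2
    have hfl := hb len le_rfl
    omega
  · push_neg at hup
    have hdown : ∀ t, t < len → f t = f (t + 1) + 1 := by
      intro t ht
      rcases hstep t ht with h' | h'
      · exact absurd h' (hup t ht)
      · exact h'
    have claim1 : ∀ t, t ≤ len → f t + t = f 0 := by
      intro t ht
      induction t with
      | zero => rfl
      | succ k ihk =>
        have := hdown k (by omega)
        have := ihk (by omega)
        omega
    have := claim1 len le_rfl
    have := hb 0 (by omega)
    omega

/-- Pigeonhole over windows: if every window of width `W` inside `[0, L)` contains an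
element of `S`, then `L < W * (S.card + 1)`. -/
lemma window_bound (L W : ℕ) (S : Finset ℕ) (hW : 0 < W)
    (hwin : ∀ i, i + W ≤ L → ∃ j, j ∈ S ∧ i ≤ j ∧ j < i + W) :
    L < W * (S.card + 1) := by
  by_contra hcon
  push_neg at hcon
  have hchoice : ∀ k, k < S.card + 1 → ∃ j, j ∈ S ∧ k * W ≤ j ∧ j < k * W + W := by
    intro k hk
    apply hwin
    have : (k + 1) * W ≤ (S.card + 1) * W := Nat.mul_le_mul_right W (by omega)
    calc k * W + W = (k + 1) * W := by ring
      _ ≤ (S.card + 1) * W := this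
      _ = W * (S.card + 1) := by ring
      _ ≤ L := hcon
  choose g hgS hg1 hg2 using hchoice
  have hinj : ∀ k, ∀ hk : k < S.card + 1, ∀ k', ∀ hk' : k' < S.card + 1,
      g k hk = g k' hk' → k = k' := by
    intro k hk k' hk' he
    by_contra hne
    rcases Nat.lt_or_ge k k' with hlt | hge
    · have h1 : k * W + W ≤ k' * W := by
        have h0 : (k + 1) * W ≤ k' * W := Nat.mul_le_mul_right W (by omega)
        calc k * W + W = (k + 1) * W := by ring
          _ ≤ k' * W := h0
      have h2 := hg2 k hk
      have h3 := hg1 k' hk'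
      rw [← he] at h3
      omega
    · have hlt : k' < k := by omega
      have h1 : k' * W + W ≤ k * W := by
        have h0 : (k' + 1) * W ≤ k * W := Nat.mul_le_mul_right W (by omega)
        calc k' * W + W = (k' + 1) * W := by ring
          _ ≤ k * W := h0
      have h2 := hg2 k' hk'
      have h3 := hg1 k hk
      rw [he] at h3
      omega
  have hcard : S.card + 1 ≤ S.card := by
    have := Finset.card_le_card_of_injOn
      (fun k : ℕ => if hk : k < S.card + 1 then g k hk else 0)
      (fun k hk => by
        simp only [Finset.mem_coe, Finset.mem_range] at hk
        simp only [dif_pos hk]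
        exact hgS k hk)
      (by
        intro a ha b hb hab
        simp only [Finset.mem_coe, Finset.mem_range] at ha hb
        simp only [dif_pos ha, dif_pos hb] at hab
        exact hinj a ha b hb hab)
      (s := Finset.range (S.card + 1)) (t := S)
    simpa using this
  omega

set_option maxHeartbeats 2000000 in
/-- For every finite simple graph `H` with at least one vertex,
`1 + LP(H) ≤ 8 · (diam(H) + 1) · (maxsurplus(H) + 1)`. -/
theorem one_add_longestPath_le (H : SimpleGraph V) [Nonempty V] :
    1 + longestPath H ≤ 8 * (graphDiam H + 1) * (maxSurplus H + 1) := by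
  classical
  -- the longest path is attained
  have hLPne : {k : ℕ | ∃ (u v : V) (p : H.Walk u v), p.IsPath ∧ p.length = k}.Nonempty := by
    obtain ⟨x⟩ := ‹Nonempty V›
    exact ⟨0, x, x, SimpleGraph.Walk.nil, SimpleGraph.Walk.IsPath.nil, rfl⟩
  have hLPbdd : BddAbove {k : ℕ | ∃ (u v : V) (p : H.Walk u v), p.IsPath ∧ p.length = k} := by
    refine ⟨Fintype.card V, ?_⟩
    rintro k ⟨u, v, p, hp, rfl⟩
    exact le_of_lt hp.length_lt
  have hmem0 : longestPath H ∈ {k : ℕ | ∃ (u v : V) (p : H.Walk u v), p.IsPath ∧ p.length = k} :=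
    Nat.sSup_mem hLPne hLPbdd
  obtain ⟨u, v, p, hp, hplen⟩ := hmem0
  -- diameter is an upper bound for distances between reachable vertices
  have hDbdd : BddAbove {k : ℕ | ∃ u v : V, H.Reachable u v ∧ H.dist u v = k} := by
    refine ⟨Fintype.card V, ?_⟩
    rintro k ⟨a, b, hab, rfl⟩
    obtain ⟨w, hwlen⟩ := hab.exists_walk_length_eq_dist
    exact le_of_lt (lt_of_le_of_lt (SimpleGraph.dist_le w.bypass) (w.bypass_isPath).length_lt)
  set D := graphDiam H with hD
  set d : V → ℕ := fun x => H.dist u x with hd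
  have hdle : ∀ x, H.Reachable u x → d x ≤ D := by
    intro x hx
    exact le_csSup hDbdd ⟨u, x, hx, rfl⟩
  -- all path vertices are reachable from u
  have hmemsup : ∀ i, i ≤ p.length → p.getVert i ∈ p.support := fun i hi =>
    SimpleGraph.Walk.mem_support_iff_exists_getVert.mpr ⟨i, rfl, hi⟩
  have hreach : ∀ i, i ≤ p.length → H.Reachable u (p.getVert i) := fun i hi =>
    ⟨p.takeUntil _ (hmemsup i hi)⟩
  have hinj := path_getVert_inj p hp
  -- the parent function
  have hparent : ∀ x, H.Reachable u x → d x ≠ 0 → ∃ y, H.Adj y x ∧ d y + 1 = d x :=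
    fun x hx hdx => exists_parent H hx hdx
  choose! par hpadj hpd using hparent
  set c := H.connectedComponentMk u with hc
  have hcc : ∀ x, H.connectedComponentMk x = c ↔ H.Reachable u x := by
    intro x
    rw [hc, SimpleGraph.ConnectedComponent.eq]
    exact ⟨fun h' => h'.symm, fun h' => h'.symm⟩
  -- tree edges
  set isT : Sym2 V → Prop := fun e => ∃ x, H.Reachable u x ∧ d x ≠ 0 ∧ e = s(par x, x) with hisT
  set CE : Finset (Sym2 V) := Finset.univ.filter (fun e : Sym2 V =>
    e ∈ H.edgeSet ∧ ∀ x ∈ e, H.connectedComponentMk x = c) with hCE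
  have hCEcard : compEdgeCount H c = CE.card := rfl
  set T : Finset (Sym2 V) := CE.filter isT with hT
  set B : Finset (Sym2 V) := CE.filter (fun e => ¬ isT e) with hB
  have hTB : T.card + B.card = CE.card := by
    rw [hT, hB]
    exact Finset.card_filter_add_card_filter_not isT
  set VC : Finset V := Finset.univ.filter (fun x => H.connectedComponentMk x = c) with hVC
  have hVCcard : compVertCount H c = VC.card := rfl
  have huVC : u ∈ VC := by
    rw [hVC]
    simp only [Finset.mem_filter, Finset.mem_univ, true_and, hc]
  have hfacts : ∀ x ∈ VC.erase u, H.Reachable u x ∧ d x ≠ 0 := by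
    intro x hx
    obtain ⟨hxu, hxVC⟩ := Finset.mem_erase.mp hx
    have hxr : H.Reachable u x := (hcc x).mp (by
      rw [hVC] at hxVC
      simpa using hxVC)
    refine ⟨hxr, fun h0 => hxu ?_⟩
    exact (hxr.dist_eq_zero_iff.mp h0).symm
  -- injection from the non-root vertices of the component into the tree edges
  have hTle : (VC.erase u).card ≤ T.card := by
    apply Finset.card_le_card_of_injOn (fun x => s(par x, x))
    · intro x hx
      obtain ⟨hxr, hdx⟩ := hfacts x hx
      have hadj := hpadj x hxr hdx
      have hpr : H.Reachable u (par x) := hxr.trans hadj.symm.reachable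
      rw [hT, Finset.mem_coe, Finset.mem_filter, hCE, Finset.mem_filter]
      refine ⟨⟨Finset.mem_univ _, ?_, ?_⟩, ?_⟩
      · exact H.mem_edgeSet.mpr hadj
      · intro y hy
        rw [Sym2.mem_iff] at hy
        rcases hy with rfl | rfl
        · exact (hcc _).mpr hpr
        · exact (hcc _).mpr hxr
      · exact ⟨x, hxr, hdx, rfl⟩
    · intro a ha b hb hab
      obtain ⟨har, hda⟩ := hfacts a (Finset.mem_coe.mp ha)
      obtain ⟨hbr, hdb⟩ := hfacts b (Finset.mem_coe.mp hb)
      have hpa := hpd a har hda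
      have hpb := hpd b hbr hdb
      rw [Sym2.eq_iff] at hab
      rcases hab with ⟨h1, h2⟩ | ⟨h1, h2⟩
      · exact h2
      · rw [h1] at hpa
        rw [← h2] at hpb
        omega
  have hVC1 : 1 ≤ VC.card := Finset.card_pos.mpr ⟨u, huVC⟩
  have herase : (VC.erase u).card = VC.card - 1 := Finset.card_erase_of_mem huVC
  -- bound the number of non-tree edges by the surplus
  have hsbdd : BddAbove {s : ℕ |
      ∃ c : H.ConnectedComponent, s = compEdgeCount H c + 1 - compVertCount H c} := by
    refine ⟨Fintype.card (Sym2 V) + 1, ?_⟩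
    rintro k ⟨c', rfl⟩
    have h1 : compEdgeCount H c' ≤ Fintype.card (Sym2 V) := by
      have := Finset.card_filter_le (Finset.univ : Finset (Sym2 V))
        (fun e : Sym2 V => e ∈ H.edgeSet ∧ ∀ x ∈ e, H.connectedComponentMk x = c')
      simpa [compEdgeCount] using this
    omega
  have hBle : B.card ≤ maxSurplus H := by
    have h1 : compEdgeCount H c + 1 - compVertCount H c ≤ maxSurplus H :=
      le_csSup hsbdd ⟨c, rfl⟩
    omega
  -- the indices of non-tree edges along the path
  set W := 2 * D + 1 with hWdef
  set S : Finset ℕ := (Finset.range p.length).filter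
      (fun i => ¬ isT s(p.getVert i, p.getVert (i + 1))) with hS
  have hSmem : ∀ i ∈ S, i < p.length ∧ ¬ isT s(p.getVert i, p.getVert (i + 1)) := by
    intro i hi
    rw [hS, Finset.mem_filter, Finset.mem_range] at hi
    exact hi
  have hSle : S.card ≤ B.card := by
    apply Finset.card_le_card_of_injOn (fun i => s(p.getVert i, p.getVert (i + 1)))
    · intro i hi
      obtain ⟨hil, hiT⟩ := hSmem i hi
      rw [hB, Finset.mem_coe, Finset.mem_filter, hCE, Finset.mem_filter]
      refine ⟨⟨Finset.mem_univ _, ?_, ?_⟩, hiT⟩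
      · exact H.mem_edgeSet.mpr (p.adj_getVert_succ hil)
      · intro y hy
        rw [Sym2.mem_iff] at hy
        rcases hy with rfl | rfl
        · exact (hcc _).mpr (hreach i (le_of_lt hil))
        · exact (hcc _).mpr (hreach (i + 1) hil)
    · intro a ha b hb hab
      have hal := (hSmem a (Finset.mem_coe.mp ha)).1
      have hbl := (hSmem b (Finset.mem_coe.mp hb)).1
      rw [Sym2.eq_iff] at hab
      rcases hab with ⟨h1, h2⟩ | ⟨h1, h2⟩
      · exact hinj a (by omega) b (by omega) h1
      · have e1 := hinj a (by omega) (b + 1) (by omega) h1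
        have e2 := hinj (a + 1) (by omega) b (by omega) h2
        omega
  -- window property: every window of width 2D+1 contains a non-tree edge
  have hwin : ∀ i, i + W ≤ p.length → ∃ j, j ∈ S ∧ i ≤ j ∧ j < i + W := by
    intro i hiW
    by_contra hno
    push_neg at hno
    have htree : ∀ t, t < W → isT s(p.getVert (i + t), p.getVert (i + t + 1)) := by
      intro t ht
      by_contra hnt
      have hjS : i + t ∈ S := by
        rw [hS, Finset.mem_filter, Finset.mem_range]
        exact ⟨by omega, hnt⟩
      have := hno (i + t) hjS (by omega)
      omega
    set f : ℕ → ℕ := fun t => d (p.getVert (i + t)) with hf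
    have hfb : ∀ t, t ≤ W → f t ≤ D := by
      intro t ht
      exact hdle _ (hreach (i + t) (by omega))
    have hfstep : ∀ t, t < W → f (t + 1) = f t + 1 ∨ f t = f (t + 1) + 1 := by
      intro t ht
      obtain ⟨x, hxr, hdx, hxe⟩ := htree t ht
      rw [Sym2.eq_iff] at hxe
      have hpdx := hpd x hxr hdx
      show d (p.getVert (i + (t + 1))) = d (p.getVert (i + t)) + 1 ∨
        d (p.getVert (i + t)) = d (p.getVert (i + (t + 1))) + 1
      rw [show i + (t + 1) = i + t + 1 from rfl]
      rcases hxe with ⟨h1, h2⟩ | ⟨h1, h2⟩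
      · left
        rw [h1, h2]
        omega
      · right
        rw [h1, h2]
        omega
    have hfmono : ∀ t, t + 1 < W → f (t + 1) = f t + 1 → f (t + 2) = f (t + 1) + 1 := by
      intro t ht hup
      have hup' : d (p.getVert (i + t + 1)) = d (p.getVert (i + t)) + 1 := hup
      -- step t is a genuine "up" step
      obtain ⟨x, hxr, hdx, hxe⟩ := htree t (by omega)
      rw [Sym2.eq_iff] at hxe
      have hpdx := hpd x hxr hdx
      have hgenup : par (p.getVert (i + t + 1)) = p.getVert (i + t) := by
        rcases hxe with ⟨h1, h2⟩ | ⟨h1, h2⟩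
        · rw [h2]
          exact h1.symm
        · exfalso
          rw [h1] at hup'
          rw [h2] at hup'
          omega
      obtain ⟨y, hyr, hdy, hye⟩ := htree (t + 1) (by omega)
      rw [show i + (t + 1) = i + t + 1 from rfl] at hye
      rw [Sym2.eq_iff] at hye
      have hpdy := hpd y hyr hdy
      show d (p.getVert (i + (t + 2))) = d (p.getVert (i + (t + 1))) + 1
      rw [show i + (t + 2) = i + t + 1 + 1 from rfl, show i + (t + 1) = i + t + 1 from rfl]
      rcases hye with ⟨h1, h2⟩ | ⟨h1, h2⟩
      · rw [h1, h2]
        omega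
      · exfalso
        have hsame : p.getVert (i + t + 1 + 1) = p.getVert (i + t) := by
          rw [h2, ← h1, hgenup]
        have := hinj (i + t + 1 + 1) (by omega) (i + t) (by omega) hsame
        omega
    have hseq := seq_bound f W D hfb hfstep hfmono
    omega
  -- put everything together
  have hfin := window_bound p.length W S (by omega) hwin
  have hS2 : S.card ≤ maxSurplus H := le_trans hSle hBle
  have h2 : p.length < W * (maxSurplus H + 1) :=
    lt_of_lt_of_le hfin (Nat.mul_le_mul_left W (by omega))
  have h3 : W * (maxSurplus H + 1) ≤ 8 * (D + 1) * (maxSurplus H + 1) :=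
    Nat.mul_le_mul_right _ (by omega)
  omega


end
end

section
/- Let k, m₀ be positive integers and x₀, x₁, …, x_k ∈ (0,1) with x₀ ≤ min{x_j : 1 ≤ j ≤ k}. Let Z_i^{(0)}, 1 ≤ i ≤ m₀, and Z^{(1)}, …, Z^{(k)} be independent random variables with Z_i^{(0)} uniformly distributed on [x₀, 1] for each i and Z^{(j)} uniformly distributed on [x_j, 1] for each j. Then P( min_{1 ≤ i ≤ m₀} Z_i^{(0)} < min_{1 ≤ j ≤ k} Z^{(j)} ) ≥ m₀/(m₀ + k). -/
open MeasureTheory ProbabilityTheory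

open scoped ENNReal

section Helpers

noncomputable def unifM (a : ℝ) : Measure ℝ := ProbabilityTheory.cond volume (Set.Icc a 1)

lemma unif_vol {a : ℝ} : volume (Set.Icc a 1) = ENNReal.ofReal (1 - a) := by
  simp [Real.volume_Icc]

lemma unif_vol_ne_zero {a : ℝ} (ha : a < 1) : volume (Set.Icc a 1) ≠ 0 := by
  rw [unif_vol]
  simp [ENNReal.ofReal_eq_zero, sub_pos, not_le, ha]

lemma unif_vol_ne_top {a : ℝ} : volume (Set.Icc a 1) ≠ ⊤ := by
  rw [unif_vol]; exact ENNReal.ofReal_ne_top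

lemma unif_prob {a : ℝ} (ha : a < 1) : IsProbabilityMeasure (unifM a) := by
  constructor
  rw [unifM, cond_apply measurableSet_Icc, Set.inter_univ,
    ENNReal.inv_mul_cancel (unif_vol_ne_zero ha) unif_vol_ne_top]

lemma unif_Ioi {a : ℝ} (ha : a < 1) (t : ℝ) :
    unifM a (Set.Ioi t) = ENNReal.ofReal ((1 - max a t) / (1 - a)) := by
  have h1 : volume (Set.Icc a 1 ∩ Set.Ioi t) = ENNReal.ofReal (1 - max a t) := by
    rcases le_total t a with h | h
    · rw [max_eq_left h]
      refine le_antisymm ?_ ?_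
      · calc volume (Set.Icc a 1 ∩ Set.Ioi t) ≤ volume (Set.Icc a 1) :=
              measure_mono Set.inter_subset_left
          _ = _ := unif_vol
      · calc ENNReal.ofReal (1 - a) = volume (Set.Ioc a 1) := (Real.volume_Ioc).symm
          _ ≤ volume (Set.Icc a 1 ∩ Set.Ioi t) := measure_mono fun y hy => by
              simp only [Set.mem_Ioc] at hy
              exact ⟨⟨hy.1.le, hy.2⟩, lt_of_le_of_lt h hy.1⟩
    · rw [max_eq_right h]
      have : Set.Icc a 1 ∩ Set.Ioi t = Set.Ioc t 1 := by
        ext y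
        simp only [Set.mem_inter_iff, Set.mem_Icc, Set.mem_Ioi, Set.mem_Ioc]
        exact ⟨fun ⟨⟨_, h2⟩, h3⟩ => ⟨h3, h2⟩, fun ⟨h1, h2⟩ => ⟨⟨h.trans h1.le, h2⟩, h1⟩⟩
      rw [this, Real.volume_Ioc]
  rw [unifM, cond_apply measurableSet_Icc, h1, unif_vol,
    ENNReal.ofReal_div_of_pos (by linarith), ENNReal.div_eq_inv_mul]

lemma unif_mono {a b t : ℝ} (hab : a ≤ b) (hb : b < 1) :
    unifM a (Set.Ioi t) ≤ unifM b (Set.Ioi t) := by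
  have ha : a < 1 := lt_of_le_of_lt hab hb
  rcases le_total 1 t with h1 | h1
  · rw [unif_Ioi ha t]
    have : (1 - max a t) / (1 - a) ≤ 0 := by
      apply div_nonpos_of_nonpos_of_nonneg
      · have := le_max_right a t; linarith
      · linarith
    simp [ENNReal.ofReal_eq_zero.mpr this]
  · rw [unif_Ioi ha t, unif_Ioi hb t]
    apply ENNReal.ofReal_le_ofReal
    rcases le_total t b with h | h
    · rw [max_eq_left h]
      have hd : (1 - b) / (1 - b) = 1 := div_self (by linarith)
      rw [hd]
      apply div_le_one_of_le₀ <;> [skip; linarith]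
      have : a ≤ max a t := le_max_left a t
      linarith
    · rw [max_eq_right h, max_eq_right (hab.trans h)]
      exact div_le_div_of_nonneg_left (by linarith) (by linarith) (by linarith)

lemma unif_atom {a : ℝ} (t : ℝ) : unifM a {t} = 0 := by
  rw [unifM, cond_apply measurableSet_Icc]
  have : volume (Set.Icc a 1 ∩ {t}) = 0 :=
    measure_mono_null Set.inter_subset_right Real.volume_singleton
  rw [this, mul_zero]

lemma joint_law {Ω : Type} [MeasurableSpace Ω] (P : Measure Ω) [IsProbabilityMeasure P]
    {ι : Type} [Fintype ι] (f : ι → Ω → ℝ) (ν : ι → Measure ℝ) [∀ i, SigmaFinite (ν i)]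
    (hm' : ∀ i, AEMeasurable (f i) P) (hlaw : ∀ i, Measure.map (f i) P = ν i)
    (hindep : iIndepFun f P) :
    Measure.map (fun ω i => f i ω) P = Measure.pi ν := by
  have hjoint : AEMeasurable (fun ω i => f i ω) P := by
    choose g hgm hge using hm'
    refine ⟨fun ω i => g i ω, measurable_pi_iff.mpr hgm, ?_⟩
    filter_upwards [ae_all_iff.mpr hge] with ω h using funext fun i => h i
  refine (Measure.pi_eq fun s hs => ?_).symm
  rw [Measure.map_apply_of_aemeasurable hjoint (MeasurableSet.univ_pi hs)]
  have hpre : (fun ω i => f i ω) ⁻¹' Set.pi Set.univ s = ⋂ i ∈ Finset.univ, f i ⁻¹' s i := by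
    ext ω; simp [Set.mem_pi]
  rw [hpre, hindep.measure_inter_preimage_eq_mul Finset.univ (fun i _ => hs i)]
  exact Finset.prod_congr rfl fun i _ => by
    rw [← hlaw i, Measure.map_apply_of_aemeasurable (hm' i) (hs i)]

lemma pair_law {ι : Type} [Fintype ι] [DecidableEq ι] (ν : ι → Measure ℝ)
    [∀ i, IsProbabilityMeasure (ν i)] {c c' : ι} (h : c ≠ c') :
    Measure.map (fun u : ι → ℝ => (u c, u c')) (Measure.pi ν) = (ν c).prod (ν c') := by
  refine (Measure.prod_eq fun s t hs ht => ?_).symm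
  rw [Measure.map_apply ((measurable_pi_apply c).prodMk (measurable_pi_apply c')) (hs.prod ht)]
  have hpre : (fun u : ι → ℝ => (u c, u c')) ⁻¹' (s ×ˢ t)
      = Set.pi Set.univ (fun d => if d = c then s else if d = c' then t else Set.univ) := by
    ext u
    simp only [Set.mem_preimage, Set.mem_prod, Set.mem_pi, Set.mem_univ, true_implies]
    constructor
    · rintro ⟨h1, h2⟩ d
      by_cases hdc : d = c
      · subst hdc; simp [if_pos rfl, h1]
      · by_cases hdc' : d = c'
        · subst hdc'; simp [if_neg hdc, h2]
        · simp [if_neg hdc, if_neg hdc']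
    · intro hd
      have h1 := hd c
      have h2 := hd c'
      rw [if_pos rfl] at h1
      rw [if_neg (Ne.symm h), if_pos rfl] at h2
      exact ⟨h1, h2⟩
  rw [hpre, Measure.pi_pi]
  rw [← Finset.mul_prod_erase Finset.univ _ (Finset.mem_univ c)]
  rw [← Finset.mul_prod_erase _ _ (Finset.mem_erase.mpr ⟨Ne.symm h, Finset.mem_univ c'⟩)]
  rw [if_pos rfl, if_neg (Ne.symm h), if_pos rfl]
  have : ∀ d ∈ ((Finset.univ.erase c).erase c'),
      (ν d) (if d = c then s else if d = c' then t else Set.univ) = 1 := by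
    intro d hd
    rw [Finset.mem_erase, Finset.mem_erase] at hd
    rw [if_neg hd.2.1, if_neg hd.1, measure_univ]
  rw [Finset.prod_congr rfl this, Finset.prod_const_one, mul_one]

lemma tie_null {ι : Type} [Fintype ι] [DecidableEq ι] (ν : ι → Measure ℝ)
    [∀ i, IsProbabilityMeasure (ν i)] (hatom : ∀ i (x : ℝ), ν i {x} = 0)
    {c c' : ι} (h : c ≠ c') : Measure.pi ν {u | u c = u c'} = 0 := by
  have hdiag : MeasurableSet {p : ℝ × ℝ | p.1 = p.2} :=
    measurableSet_eq_fun measurable_fst measurable_snd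
  have heq : {u : ι → ℝ | u c = u c'} = (fun u : ι → ℝ => (u c, u c')) ⁻¹' {p | p.1 = p.2} := rfl
  rw [heq, ← Measure.map_apply ((measurable_pi_apply c).prodMk (measurable_pi_apply c')) hdiag,
    pair_law ν h, Measure.prod_apply hdiag]
  have hz : ∀ x : ℝ, (ν c') (Prod.mk x ⁻¹' {p : ℝ × ℝ | p.1 = p.2}) = 0 := by
    intro x
    have hx : (Prod.mk x ⁻¹' {p : ℝ × ℝ | p.1 = p.2}) = {x} := by
      ext y; simp [eq_comm]
    rw [hx]; exact hatom c' x
  rw [lintegral_congr hz, lintegral_zero]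

lemma measurable_finset_inf' {δ : Type*} [MeasurableSpace δ] {κ : Type*} {s : Finset κ}
    (hs : s.Nonempty) (f : κ → δ → ℝ) (hf : ∀ i, Measurable (f i)) :
    Measurable fun x => s.inf' hs fun i => f i x := by
  induction hs using Finset.Nonempty.cons_induction with
  | singleton a => simpa using hf a
  | cons a s ha hs ih =>
      have : (fun x => (Finset.cons a s ha).inf' (Finset.cons_nonempty ha) fun i => f i x)
          = fun x => min (f a x) (s.inf' hs fun i => f i x) := by
        funext x; exact Finset.inf'_cons (H := hs) (f := fun i => f i x)
      rw [this]; exact (hf a).min ih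

end Helpers


lemma symmetric_case' {m k : ℕ} (hm : 0 < m) (hk : 0 < k) (μ0 : Measure ℝ)
    [IsProbabilityMeasure μ0] (hatom : ∀ x : ℝ, μ0 {x} = 0) :
    ENNReal.ofReal ((m : ℝ) / ((m : ℝ) + (k : ℝ))) ≤
      Measure.pi (fun _ : Fin m ⊕ Fin k => μ0)
        {u | (⨅ i : Fin m, u (Sum.inl i)) < ⨅ j : Fin k, u (Sum.inr j)} := by
  classical
  haveI : NeZero m := ⟨hm.ne'⟩
  haveI : NeZero k := ⟨hk.ne'⟩
  set ι := Fin m ⊕ Fin k with hι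
  set ρ : Measure (ι → ℝ) := Measure.pi (fun _ : ι => μ0) with hρ
  haveI : IsProbabilityMeasure ρ := by rw [hρ]; infer_instance
  set A : ι → Set (ι → ℝ) := fun c => {u | ∀ c', c' ≠ c → u c < u c'} with hA
  have hAmeas : ∀ c, MeasurableSet (A c) := by
    intro c
    have : A c = ⋂ c', ⋂ (_ : c' ≠ c), {u : ι → ℝ | u c < u c'} := by
      ext u; simp [hA]
    rw [this]
    exact MeasurableSet.iInter fun c' => MeasurableSet.iInter fun _ =>
      measurableSet_lt (measurable_pi_apply c) (measurable_pi_apply c')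
  have hdisj : Pairwise (Function.onFun Disjoint A) := by
    intro c c' hcc
    refine Set.disjoint_left.mpr fun u hu hu' => ?_
    exact lt_asymm (hu c' (Ne.symm hcc)) (hu' c hcc)
  -- permutation invariance
  have hswap : ∀ c c', ρ (A c) = ρ (A c') := by
    intro c c'
    set e := Equiv.swap c c' with he
    have hmp := measurePreserving_piCongrLeft (fun _ : ι => μ0) e
    set T := MeasurableEquiv.piCongrLeft (fun _ : ι => ℝ) e with hT
    have hTa : ∀ (u : ι → ℝ) d, T u d = u (e.symm d) := by
      intro u d
      conv_lhs => rw [← e.apply_symm_apply d]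
      rw [hT, MeasurableEquiv.coe_piCongrLeft, Equiv.piCongrLeft_apply_apply]
    have hpre : ⇑T ⁻¹' (A c') = A c := by
      ext u
      simp only [Set.mem_preimage, hA, Set.mem_setOf_eq]
      constructor
      · intro H d hd
        have hd' : e d ≠ c' := by
          simp only [he]
          intro hcon
          apply hd
          have := congrArg (Equiv.swap c c') hcon
          rwa [Equiv.swap_apply_self, Equiv.swap_apply_right] at this
        have := H (e d) hd'
        rw [hTa, hTa, Equiv.symm_swap, Equiv.swap_apply_right,
          Equiv.swap_apply_self] at this
        exact this
      · intro H d hd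
        rw [hTa, hTa, Equiv.symm_swap, Equiv.swap_apply_right]
        apply H
        intro hcon
        apply hd
        have := congrArg (Equiv.swap c c') hcon
        rwa [Equiv.swap_apply_self, Equiv.swap_apply_left] at this
    have h2 := hmp.measure_preimage (hAmeas c').nullMeasurableSet
    rw [hpre] at h2
    exact h2
  -- total mass one
  have hone : (1 : ℝ≥0∞) ≤ ρ (⋃ c, A c) := by
    have hcompl : ρ ((⋃ c, A c)ᶜ) = 0 := by
      have hsub : (⋃ c, A c)ᶜ ⊆
          ⋃ (c : ι), ⋃ (c' : ι), ⋃ (_ : c ≠ c'), {u : ι → ℝ | u c = u c'} := by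
        intro u hu
        simp only [Set.mem_compl_iff, Set.mem_iUnion, Set.mem_setOf_eq] at hu ⊢
        rw [not_exists] at hu
        obtain ⟨c₀, -, hc₀⟩ := Finset.exists_min_image Finset.univ u
          ⟨Sum.inl ⟨0, hm⟩, Finset.mem_univ _⟩
        have : ¬ (∀ c', c' ≠ c₀ → u c₀ < u c') := hu c₀
        push_neg at this
        obtain ⟨c', hc', hle⟩ := this
        exact ⟨c₀, c', Ne.symm hc', le_antisymm (hc₀ c' (Finset.mem_univ _)) hle⟩
      refine measure_mono_null hsub ?_
      refine measure_iUnion_null fun c => measure_iUnion_null fun c' =>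
        measure_iUnion_null fun hcc => tie_null _ (fun _ => hatom) hcc
    have := measure_union_le (μ := ρ) (⋃ c, A c) (⋃ c, A c)ᶜ
    rw [Set.union_compl_self, measure_univ, hcompl, add_zero] at this
    exact this
  have hsum : ρ (⋃ c, A c) = ∑ c : ι, ρ (A c) := by
    rw [measure_iUnion hdisj hAmeas, tsum_fintype]
  -- common value
  set c₀ : ι := Sum.inl ⟨0, hm⟩ with hc₀
  set N : ℕ := m + k with hN
  have hcardι : Fintype.card ι = N := by simp [hι, hN]
  have hNv : (N : ℝ≥0∞) * ρ (A c₀) ≥ 1 := by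
    calc (1:ℝ≥0∞) ≤ ρ (⋃ c, A c) := hone
      _ = ∑ c : ι, ρ (A c) := hsum
      _ = ∑ _c : ι, ρ (A c₀) := Finset.sum_congr rfl fun c _ => hswap c c₀
      _ = (N : ℝ≥0∞) * ρ (A c₀) := by
          rw [Finset.sum_const, Finset.card_univ, hcardι, nsmul_eq_mul]
  have hv : (N : ℝ≥0∞)⁻¹ ≤ ρ (A c₀) := by
    have hN0 : (N : ℝ≥0∞) ≠ 0 := Nat.cast_ne_zero.mpr (by omega)
    have hNt : (N : ℝ≥0∞) ≠ ⊤ := ENNReal.natCast_ne_top N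
    calc (N : ℝ≥0∞)⁻¹ = (N : ℝ≥0∞)⁻¹ * 1 := (mul_one _).symm
      _ ≤ (N : ℝ≥0∞)⁻¹ * ((N : ℝ≥0∞) * ρ (A c₀)) := by
          exact mul_le_mul_right hNv _
      _ = ρ (A c₀) := by rw [← mul_assoc, ENNReal.inv_mul_cancel hN0 hNt, one_mul]
  -- inclusion into the event
  have hsubE : (⋃ i : Fin m, A (Sum.inl i)) ⊆
      {u : ι → ℝ | (⨅ i : Fin m, u (Sum.inl i)) < ⨅ j : Fin k, u (Sum.inr j)} := by
    rintro u hu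
    simp only [Set.mem_iUnion] at hu
    obtain ⟨i, hi⟩ := hu
    simp only [Set.mem_setOf_eq]
    rw [← Finset.inf'_univ_eq_ciInf (fun i' : Fin m => u (Sum.inl i')),
      ← Finset.inf'_univ_eq_ciInf (fun j : Fin k => u (Sum.inr j))]
    calc Finset.univ.inf' Finset.univ_nonempty (fun i' : Fin m => u (Sum.inl i'))
        ≤ u (Sum.inl i) := Finset.inf'_le _ (Finset.mem_univ i)
      _ < Finset.univ.inf' Finset.univ_nonempty (fun j : Fin k => u (Sum.inr j)) := by
          rw [Finset.lt_inf'_iff]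
          exact fun j _ => hi (Sum.inr j) (by simp)
  -- final chain
  calc ENNReal.ofReal ((m : ℝ) / ((m : ℝ) + (k : ℝ)))
      = (m : ℝ≥0∞) * (N : ℝ≥0∞)⁻¹ := by
        rw [ENNReal.ofReal_div_of_pos (by positivity)]
        have h1 : ((m : ℝ) + (k : ℝ)) = ((N : ℕ) : ℝ) := by push_cast [hN]; ring
        rw [h1, ENNReal.ofReal_natCast, ENNReal.ofReal_natCast, div_eq_mul_inv]
    _ ≤ (m : ℝ≥0∞) * ρ (A c₀) := mul_le_mul_right hv _
    _ = ∑ i : Fin m, ρ (A (Sum.inl i)) := by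
        rw [Finset.sum_congr rfl fun (i : Fin m) _ => (hswap (Sum.inl i) c₀),
          Finset.sum_const, Finset.card_univ, Fintype.card_fin, nsmul_eq_mul]
    _ = ρ (⋃ i : Fin m, A (Sum.inl i)) := by
        have hd' : Pairwise (Function.onFun Disjoint (fun i : Fin m => A (Sum.inl i))) :=
          fun i i' hii => hdisj (Sum.inl_injective.ne hii)
        rw [measure_iUnion hd' (fun i => hAmeas _), tsum_fintype]
    _ ≤ _ := measure_mono hsubE


section Dom

variable {m k : ℕ}

lemma measurable_iInf_eval [NeZero m] :
    Measurable fun w : Fin m → ℝ => ⨅ i, w i := by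
  haveI : Nonempty (Fin m) := Fin.pos_iff_nonempty.mp (Nat.pos_of_ne_zero (NeZero.ne m))
  have h : (fun w : Fin m → ℝ => ⨅ i, w i)
      = fun w => Finset.univ.inf' Finset.univ_nonempty fun i => w i := by
    funext w; exact (Finset.inf'_univ_eq_ciInf fun i => w i).symm
  rw [h]
  exact measurable_finset_inf' _ (fun i => fun w : Fin m → ℝ => w i) fun i => measurable_pi_apply i

lemma E_meas [NeZero m] [NeZero k] :
    MeasurableSet {u : Fin m ⊕ Fin k → ℝ |
      (⨅ i : Fin m, u (Sum.inl i)) < ⨅ j : Fin k, u (Sum.inr j)} := by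
  apply measurableSet_lt
  · exact measurable_iInf_eval.comp
      (measurable_pi_lambda _ fun i => measurable_pi_apply (Sum.inl i))
  · exact measurable_iInf_eval.comp
      (measurable_pi_lambda _ fun j => measurable_pi_apply (Sum.inr j))

lemma pi_event_eq [NeZero m] [NeZero k] (ν : Fin m ⊕ Fin k → Measure ℝ)
    [∀ c, IsProbabilityMeasure (ν c)] :
    Measure.pi ν {u | (⨅ i : Fin m, u (Sum.inl i)) < ⨅ j : Fin k, u (Sum.inr j)}
      = ∫⁻ w : Fin m → ℝ, ∏ j : Fin k, ν (Sum.inr j) (Set.Ioi (⨅ i, w i))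
          ∂(Measure.pi fun i : Fin m => ν (Sum.inl i)) := by
  haveI : Nonempty (Fin k) := Fin.pos_iff_nonempty.mp (Nat.pos_of_ne_zero (NeZero.ne k))
  set T := (MeasurableEquiv.sumPiEquivProdPi (fun _ : Fin m ⊕ Fin k => ℝ)).symm with hTdef
  have hmp := measurePreserving_sumPiEquivProdPi_symm ν
  set E := {u : Fin m ⊕ Fin k → ℝ |
      (⨅ i : Fin m, u (Sum.inl i)) < ⨅ j : Fin k, u (Sum.inr j)} with hE
  have hEm : MeasurableSet E := E_meas
  have h1 : Measure.pi ν E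
      = ((Measure.pi fun i : Fin m => ν (Sum.inl i)).prod
          (Measure.pi fun j : Fin k => ν (Sum.inr j))) (⇑T ⁻¹' E) :=
    (hmp.measure_preimage hEm.nullMeasurableSet).symm
  have hpre : ⇑T ⁻¹' E
      = {p : (Fin m → ℝ) × (Fin k → ℝ) | (⨅ i, p.1 i) < ⨅ j, p.2 j} := by
    ext p
    simp only [Set.mem_preimage, hE, Set.mem_setOf_eq, hTdef,
      MeasurableEquiv.coe_sumPiEquivProdPi_symm, Equiv.sumPiEquivProdPi_symm_apply]
  have hSm : MeasurableSet {p : (Fin m → ℝ) × (Fin k → ℝ) | (⨅ i, p.1 i) < ⨅ j, p.2 j} :=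
    measurableSet_lt (measurable_iInf_eval.comp measurable_fst)
      (measurable_iInf_eval.comp measurable_snd)
  rw [h1, hpre, Measure.prod_apply hSm]
  congr 1
  funext w
  have hsec : (Prod.mk w ⁻¹' {p : (Fin m → ℝ) × (Fin k → ℝ) | (⨅ i, p.1 i) < ⨅ j, p.2 j})
      = Set.pi Set.univ (fun _ : Fin k => Set.Ioi (⨅ i, w i)) := by
    ext v
    simp only [Set.mem_preimage, Set.mem_setOf_eq, Set.mem_pi, Set.mem_univ, true_implies,
      Set.mem_Ioi]
    rw [← Finset.inf'_univ_eq_ciInf fun j => v j, Finset.lt_inf'_iff]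
    simp
  rw [hsec, Measure.pi_pi]

lemma domination (hm : 0 < m) (hk : 0 < k) (ν : Fin m ⊕ Fin k → Measure ℝ)
    [∀ c, IsProbabilityMeasure (ν c)] (μ0 : Measure ℝ) [IsProbabilityMeasure μ0]
    (h0 : ∀ i, ν (Sum.inl i) = μ0)
    (hdom : ∀ j t, μ0 (Set.Ioi t) ≤ ν (Sum.inr j) (Set.Ioi t)) :
    Measure.pi (fun _ : Fin m ⊕ Fin k => μ0)
        {u | (⨅ i : Fin m, u (Sum.inl i)) < ⨅ j : Fin k, u (Sum.inr j)}
      ≤ Measure.pi ν {u | (⨅ i : Fin m, u (Sum.inl i)) < ⨅ j : Fin k, u (Sum.inr j)} := by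
  haveI : NeZero m := ⟨hm.ne'⟩
  haveI : NeZero k := ⟨hk.ne'⟩
  rw [pi_event_eq (fun _ => μ0), pi_event_eq ν]
  have hmeq : (Measure.pi fun i : Fin m => ν (Sum.inl i))
      = (Measure.pi fun _ : Fin m => μ0) := by
    congr 1; funext i; exact h0 i
  rw [hmeq]
  apply lintegral_mono
  intro w
  exact Finset.prod_le_prod' fun j _ => hdom j _

end Dom


/-- Let `Z₀ᵢ ~ Uniform[x₀, 1]` (`1 ≤ i ≤ m₀`) and `Zʲ ~ Uniform[x_j, 1]`
(`1 ≤ j ≤ k`) be independent, where `x₀, x₁, …, x_k ∈ (0,1)` and `x₀ ≤ min_j x_j`. Then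
`P(min_i Z₀ᵢ < min_j Zʲ) ≥ m₀/(m₀ + k)`. -/
theorem min_uniform_comparison
    {Ω : Type} [MeasurableSpace Ω] (P : Measure Ω) [IsProbabilityMeasure P]
    (m₀ k : ℕ) (hm₀ : 0 < m₀) (hk : 0 < k)
    (x₀ : ℝ) (x : Fin k → ℝ)
    (hx₀ : x₀ ∈ Set.Ioo (0 : ℝ) 1) (hx : ∀ j, x j ∈ Set.Ioo (0 : ℝ) 1)
    (hx₀le : ∀ j, x₀ ≤ x j)
    (Z₀ : Fin m₀ → Ω → ℝ) (Z : Fin k → Ω → ℝ)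
    (hZ₀ : ∀ i, pdf.IsUniform (Z₀ i) (Set.Icc x₀ 1) P)
    (hZ : ∀ j, pdf.IsUniform (Z j) (Set.Icc (x j) 1) P)
    (hindep : iIndepFun (Sum.elim Z₀ Z) P) :
    ENNReal.ofReal ((m₀ : ℝ) / ((m₀ : ℝ) + (k : ℝ))) ≤
      P {ω | (⨅ i : Fin m₀, Z₀ i ω) < ⨅ j : Fin k, Z j ω} := by
  haveI : NeZero m₀ := ⟨hm₀.ne'⟩
  haveI : NeZero k := ⟨hk.ne'⟩
  set ν : Fin m₀ ⊕ Fin k → Measure ℝ :=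
    fun c => unifM (Sum.elim (fun _ : Fin m₀ => x₀) x c) with hν
  haveI hprob : ∀ c, IsProbabilityMeasure (ν c) := by
    rintro (i | j)
    · exact unif_prob hx₀.2
    · exact unif_prob (hx j).2
  have hlaw : ∀ c, Measure.map (Sum.elim Z₀ Z c) P = ν c := by
    rintro (i | j)
    · exact hZ₀ i
    · exact hZ j
  have haem : ∀ c, AEMeasurable (Sum.elim Z₀ Z c) P := by
    rintro (i | j)
    · exact (hZ₀ i).aemeasurable (unif_vol_ne_zero hx₀.2) unif_vol_ne_top
    · exact (hZ j).aemeasurable (unif_vol_ne_zero (hx j).2) unif_vol_ne_top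
  have hjoint : Measure.map (fun ω c => Sum.elim Z₀ Z c ω) P = Measure.pi ν :=
    joint_law P _ ν haem hlaw hindep
  have hAE : AEMeasurable (fun ω c => Sum.elim Z₀ Z c ω) P := by
    choose g hgm hge using haem
    refine ⟨fun ω c => g c ω, measurable_pi_iff.mpr hgm, ?_⟩
    filter_upwards [ae_all_iff.mpr hge] with ω h using funext fun c => h c
  set E := {u : Fin m₀ ⊕ Fin k → ℝ |
      (⨅ i : Fin m₀, u (Sum.inl i)) < ⨅ j : Fin k, u (Sum.inr j)} with hE
  have hPE : P {ω | (⨅ i : Fin m₀, Z₀ i ω) < ⨅ j : Fin k, Z j ω} = Measure.pi ν E := by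
    have hpre : {ω | (⨅ i : Fin m₀, Z₀ i ω) < ⨅ j : Fin k, Z j ω}
        = (fun ω c => Sum.elim Z₀ Z c ω) ⁻¹' E := rfl
    rw [hpre, ← Measure.map_apply_of_aemeasurable hAE E_meas, hjoint]
  rw [hPE]
  haveI : IsProbabilityMeasure (unifM x₀) := unif_prob hx₀.2
  calc ENNReal.ofReal ((m₀ : ℝ) / ((m₀ : ℝ) + (k : ℝ)))
      ≤ Measure.pi (fun _ : Fin m₀ ⊕ Fin k => unifM x₀) E :=
        symmetric_case' hm₀ hk (unifM x₀) (fun t => unif_atom t)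
    _ ≤ Measure.pi ν E :=
        domination hm₀ hk ν (unifM x₀) (fun i => rfl)
          (fun j t => unif_mono (hx₀le j) (hx j).2)
end

section
/- Let k, m₀ be positive integers and x₀, x₁, …, x_k ∈ (0,1) with x₀ ≤ min{x_j : 1 ≤ j ≤ k}, and let k̄, m̄₀ be positive integers and x̄₀, x̄₁, …, x̄_{k̄} ∈ (0,1) with x̄₀ ≤ min{x̄_l : 1 ≤ l ≤ k̄}. Let Z_i^{(0)} ~ Uniform[x₀,1] (1 ≤ i ≤ m₀), Z^{(j)} ~ Uniform[x_j,1] (1 ≤ j ≤ k), Z̄_i^{(0)} ~ Uniform[x̄₀,1] (1 ≤ i ≤ m̄₀), and Z̄^{(l)} ~ Uniform[x̄_l,1] (1 ≤ l ≤ k̄) all be mutually independent. Then P( min_{1 ≤ i ≤ m₀} Z_i^{(0)} ∧ min_{1 ≤ i ≤ m̄₀} Z̄_i^{(0)} < min_{1 ≤ j ≤ k} Z^{(j)} ∧ min_{1 ≤ l ≤ k̄} Z̄^{(l)} ) ≥ min( m₀/(m₀ + k), m̄₀/(m̄₀ + k̄) ). -/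
open MeasureTheory ProbabilityTheory Set Filter
open scoped ENNReal NNReal

section AuxLemmas

lemma meas_tail_gt (ν : Measure ℝ) [IsProbabilityMeasure ν]
    (hatom : ∀ c : ℝ, ν {c} = 0) {s : ℝ} (hs : 0 < s) :
    ν {c | s < (ν (Set.Ici c)).toReal} ≤ ENNReal.ofReal (1 - s) := by
  set G : ℝ → ℝ := fun c => (ν (Set.Ici c)).toReal with hG
  have hGanti : Antitone G := fun a b hab =>
    ENNReal.toReal_mono (measure_ne_top _ _) (measure_mono (Set.Ici_subset_Ici.2 hab))
  rcases Set.eq_empty_or_nonempty {c | s < G c} with h | hne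
  · rw [h]; simp
  have htends : Tendsto (fun n : ℕ => ν (Set.Ici (n : ℝ))) atTop
      (nhds (ν (⋂ n : ℕ, Set.Ici (n : ℝ)))) :=
    tendsto_measure_iInter_atTop (fun n => measurableSet_Ici.nullMeasurableSet)
      (fun a b hab => Set.Ici_subset_Ici.2 (by exact_mod_cast hab)) ⟨0, measure_ne_top _ _⟩
  have hiempty : (⋂ n : ℕ, Set.Ici (n : ℝ)) = ∅ := by
    ext y
    simp only [Set.mem_iInter, Set.mem_Ici, Set.mem_empty_iff_false, iff_false, not_forall, not_le]
    exact exists_nat_gt y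
  rw [hiempty, measure_empty] at htends
  have hofs : (0 : ℝ≥0∞) < ENNReal.ofReal s := by simpa using hs
  obtain ⟨n, hn⟩ : ∃ n : ℕ, ν (Set.Ici (n : ℝ)) < ENNReal.ofReal s :=
    (htends.eventually_lt_const hofs).exists
  have hmemle : ∀ c ∈ {c | s < G c}, ENNReal.ofReal s ≤ ν (Set.Ici c) := by
    intro c hc
    calc ENNReal.ofReal s ≤ ENNReal.ofReal (G c) := ENNReal.ofReal_le_ofReal hc.le
      _ = ν (Set.Ici c) := ENNReal.ofReal_toReal (measure_ne_top _ _)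
  have hbdd : BddAbove {c | s < G c} := by
    refine ⟨n, fun c hc => ?_⟩
    by_contra hcn
    push_neg at hcn
    have h1 : ν (Set.Ici c) ≤ ν (Set.Ici (n : ℝ)) :=
      measure_mono (Set.Ici_subset_Ici.2 hcn.le)
    exact absurd (lt_of_le_of_lt (hmemle c hc) (h1.trans_lt hn)) (lt_irrefl _)
  set t := sSup {c | s < G c} with ht
  have hsub : {c | s < G c} ⊆ Set.Iic t := fun c hc => le_csSup hbdd hc
  have hlt : ∀ c, c < t → ENNReal.ofReal s ≤ ν (Set.Ici c) := by
    intro c hc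
    obtain ⟨a, haA, hca⟩ := exists_lt_of_lt_csSup hne hc
    exact hmemle c (lt_of_lt_of_le haA (hGanti hca.le))
  have hIcit : ENNReal.ofReal s ≤ ν (Set.Ici t) := by
    have h3 : (⋂ n : ℕ, Set.Ici (t - 1 / (n + 1))) = Set.Ici t := by
      ext y
      simp only [Set.mem_iInter, Set.mem_Ici]
      constructor
      · intro h
        have hlim : Tendsto (fun n : ℕ => t - 1 / (n + 1 : ℝ)) atTop (nhds t) := by
          have h0 := tendsto_one_div_add_atTop_nhds_zero_nat (𝕜 := ℝ)
          simpa using (tendsto_const_nhds (x := t) (f := atTop)).sub h0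
        exact le_of_tendsto hlim (Eventually.of_forall h)
      · intro h n
        have : (0:ℝ) < 1 / (n + 1 : ℝ) := by positivity
        linarith
    have htd : Tendsto (fun n : ℕ => ν (Set.Ici (t - 1 / (n + 1)))) atTop
        (nhds (ν (Set.Ici t))) := by
      rw [← h3]
      refine tendsto_measure_iInter_atTop (fun n => measurableSet_Ici.nullMeasurableSet)
        (fun a b hab => Set.Ici_subset_Ici.2 ?_) ⟨0, measure_ne_top _ _⟩
      have : (1:ℝ) / (b + 1) ≤ 1 / (a + 1) := by
        apply one_div_le_one_div_of_le (by positivity)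
        exact_mod_cast by omega
      linarith
    refine ge_of_tendsto htd (Eventually.of_forall fun n => hlt _ ?_)
    have : (0:ℝ) < 1 / (n + 1 : ℝ) := by positivity
    linarith
  have hIoi : ν (Set.Ioi t) = ν (Set.Ici t) := by
    apply le_antisymm (measure_mono Set.Ioi_subset_Ici_self)
    calc ν (Set.Ici t) ≤ ν ({t} ∪ Set.Ioi t) := by
          apply measure_mono
          intro y hy
          rcases eq_or_lt_of_le (Set.mem_Ici.1 hy) with h | h
          · exact Or.inl (by simp [h.symm])
          · exact Or.inr h
      _ ≤ ν {t} + ν (Set.Ioi t) := measure_union_le _ _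
      _ = ν (Set.Ioi t) := by rw [hatom]; simp
  calc ν {c | s < G c} ≤ ν (Set.Iic t) := measure_mono hsub
    _ = 1 - ν (Set.Ioi t) := by
        rw [← Set.compl_Ioi, prob_compl_eq_one_sub measurableSet_Ioi]
    _ ≤ 1 - ENNReal.ofReal s := by
        rw [hIoi]; exact tsub_le_tsub_left hIcit 1
    _ = ENNReal.ofReal (1 - s) := by
        rw [ENNReal.ofReal_sub 1 hs.le, ENNReal.ofReal_one]




lemma tail_integral_aux {β : ℝ} (hβ : 0 < β) :
    ∫⁻ t in Set.Ioi (0:ℝ), ENNReal.ofReal (1 - t ^ β⁻¹) ≤ ENNReal.ofReal (1 / (1 + β)) := by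
  rw [← Set.Ioc_union_Ioi_eq_Ioi (zero_le_one (α := ℝ)),
    lintegral_union measurableSet_Ioi (Set.Ioc_disjoint_Ioi le_rfl)]
  have h2 : ∫⁻ t in Set.Ioi (1:ℝ), ENNReal.ofReal (1 - t ^ β⁻¹) = 0 := by
    have hz : ∫⁻ t in Set.Ioi (1:ℝ), ENNReal.ofReal (1 - t ^ β⁻¹)
        = ∫⁻ _ in Set.Ioi (1:ℝ), (0:ℝ≥0∞) := by
      apply setLIntegral_congr_fun measurableSet_Ioi
      refine fun t ht => ?_
      simp only [ENNReal.ofReal_eq_zero, sub_nonpos]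
      exact Real.one_le_rpow (le_of_lt ht) (by positivity)
    simpa using hz
  have h1' : IntervalIntegrable (fun t : ℝ => t ^ β⁻¹) volume 0 1 :=
    intervalIntegral.intervalIntegrable_rpow (Or.inl (by positivity))
  have hint : IntegrableOn (fun t : ℝ => 1 - t ^ β⁻¹) (Set.Ioc 0 1) := by
    have := (intervalIntegrable_const (c := (1:ℝ))).sub h1'
    rwa [intervalIntegrable_iff_integrableOn_Ioc_of_le zero_le_one] at this
  have hnn : 0 ≤ᵐ[volume.restrict (Set.Ioc (0:ℝ) 1)] fun t : ℝ => 1 - t ^ β⁻¹ := by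
    rw [EventuallyLE, ae_restrict_iff' measurableSet_Ioc]
    refine Eventually.of_forall fun t ht => ?_
    have : t ^ β⁻¹ ≤ 1 := Real.rpow_le_one ht.1.le ht.2 (by positivity)
    simp only [Pi.zero_apply]; linarith
  have h1 : ∫⁻ t in Set.Ioc (0:ℝ) 1, ENNReal.ofReal (1 - t ^ β⁻¹)
      = ENNReal.ofReal (1 / (1 + β)) := by
    rw [← ofReal_integral_eq_lintegral_ofReal hint hnn]
    congr 1
    open intervalIntegral in
    rw [← intervalIntegral.integral_of_le zero_le_one,
      intervalIntegral.integral_sub intervalIntegrable_const h1',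
      intervalIntegral.integral_const,
      integral_rpow (Or.inl (by linarith [inv_pos.2 hβ] : (-1:ℝ) < β⁻¹)),
      Real.one_rpow, Real.zero_rpow (ne_of_gt (by positivity : (0:ℝ) < β⁻¹ + 1))]
    have hβ1 : β⁻¹ + 1 ≠ 0 := ne_of_gt (by positivity)
    have hβ2 : 1 + β ≠ 0 := ne_of_gt (by positivity)
    field_simp
    simp only [sub_zero, smul_eq_mul, one_mul]; ring
  rw [h1, h2, add_zero]

lemma tail_rpow_lintegral_le (ν : Measure ℝ) [IsProbabilityMeasure ν]
    (hatom : ∀ c : ℝ, ν {c} = 0) {β : ℝ} (hβ : 0 < β) :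
    ∫⁻ c, (ν (Set.Ici c)) ^ β ∂ν ≤ ENNReal.ofReal (1 / (1 + β)) := by
  have hGm : Measurable fun c : ℝ => ν (Set.Ici c) :=
    Antitone.measurable (fun a b hab => measure_mono (Set.Ici_subset_Ici.2 hab))
  have heq : ∀ c : ℝ, (ν (Set.Ici c)) ^ β = ENNReal.ofReal ((ν (Set.Ici c)).toReal ^ β) := by
    intro c
    rw [← ENNReal.ofReal_rpow_of_nonneg ENNReal.toReal_nonneg hβ.le,
      ENNReal.ofReal_toReal (measure_ne_top _ _)]
  simp_rw [heq]
  rw [lintegral_eq_lintegral_meas_lt ν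
    (Eventually.of_forall fun c => Real.rpow_nonneg ENNReal.toReal_nonneg β)
    ((hGm.ennreal_toReal.pow measurable_const).aemeasurable)]
  refine le_trans (setLIntegral_mono
    ((measurable_const.sub (measurable_id.pow measurable_const)).ennreal_ofReal)
    (fun t (ht : t ∈ Set.Ioi (0:ℝ)) => ?_)) (tail_integral_aux hβ)
  have hset : {a : ℝ | t < (ν (Set.Ici a)).toReal ^ β}
      = {a : ℝ | t ^ β⁻¹ < (ν (Set.Ici a)).toReal} := by
    ext a
    simp only [Set.mem_setOf_eq]
    constructor
    · intro h
      have h0 : (0:ℝ) ≤ (ν (Set.Ici a)).toReal := ENNReal.toReal_nonneg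
      rw [← Real.rpow_inv_rpow (le_of_lt ht) hβ.ne'] at h
      exact (Real.rpow_lt_rpow_iff (Real.rpow_nonneg (le_of_lt ht) _) h0 hβ).1 h
    · intro h
      have h' := Real.rpow_lt_rpow (Real.rpow_nonneg (le_of_lt ht) _) h hβ
      rwa [Real.rpow_inv_rpow (le_of_lt ht) hβ.ne'] at h'
  rw [hset]
  exact meas_tail_gt ν hatom (Real.rpow_pos_of_pos ht β⁻¹)


lemma surv_le_one {a c : ℝ} (ha : a < 1) :
    ENNReal.ofReal ((1 - max a c) / (1 - a)) ≤ 1 := by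
  rw [← ENNReal.ofReal_one]
  apply ENNReal.ofReal_le_ofReal
  rw [div_le_one (by linarith)]
  have := le_max_left a c
  linarith

lemma surv_mono {a b c : ℝ} (ha : 0 < a) (hb : b < 1) (hab : a ≤ b) :
    ENNReal.ofReal ((1 - max a c) / (1 - a)) ≤ ENNReal.ofReal ((1 - max b c) / (1 - b)) := by
  have ha1 : a < 1 := lt_of_le_of_lt hab hb
  rcases le_or_gt c b with h | h
  · rw [max_eq_left h, div_self (by linarith : (1:ℝ) - b ≠ 0), ENNReal.ofReal_one]
    exact surv_le_one ha1
  · rw [max_eq_right h.le, max_eq_right (le_of_lt (lt_of_le_of_lt hab h))]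
    rcases le_or_gt c 1 with h1 | h1
    · apply ENNReal.ofReal_le_ofReal
      gcongr
    · have h2 : (1 - c) / (1 - a) ≤ 0 :=
        div_nonpos_iff.2 (Or.inr ⟨by linarith, by linarith⟩)
      rw [ENNReal.ofReal_eq_zero.2 h2]
      exact zero_le

lemma uniform_surv {Ω : Type} [MeasurableSpace Ω] {P : Measure Ω} {X : Ω → ℝ} {a : ℝ}
    (ha : 0 < a) (ha1 : a < 1) (hu : pdf.IsUniform X (Set.Icc a 1) P) (A : Set ℝ)
    (hA : MeasurableSet A) :
    P (X ⁻¹' A) = volume (Set.Icc a 1 ∩ A) / ENNReal.ofReal (1 - a) := by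
  have hvol : volume (Set.Icc a 1) = ENNReal.ofReal (1 - a) := Real.volume_Icc
  have hns : volume (Set.Icc a 1) ≠ 0 := by
    rw [hvol]; simp only [ne_eq, ENNReal.ofReal_eq_zero, not_le]; linarith
  have hnt : volume (Set.Icc a 1) ≠ ⊤ := by rw [hvol]; exact ENNReal.ofReal_ne_top
  rw [hu.measure_preimage hns hnt hA, hvol]

lemma uniform_surv_Ici {Ω : Type} [MeasurableSpace Ω] {P : Measure Ω} {X : Ω → ℝ} {a : ℝ}
    (ha : 0 < a) (ha1 : a < 1) (hu : pdf.IsUniform X (Set.Icc a 1) P) (c : ℝ) :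
    P (X ⁻¹' Set.Ici c) = ENNReal.ofReal ((1 - max a c) / (1 - a)) := by
  rw [uniform_surv ha ha1 hu _ measurableSet_Ici]
  have hset : Set.Icc a 1 ∩ Set.Ici c = Set.Icc (max a c) 1 := by
    ext y
    simp only [Set.mem_inter_iff, Set.mem_Icc, Set.mem_Ici, max_le_iff]
    tauto
  rw [hset, Real.volume_Icc, ← ENNReal.ofReal_div_of_pos (by linarith : (0:ℝ) < 1 - a)]

lemma uniform_atom {Ω : Type} [MeasurableSpace Ω] {P : Measure Ω} {X : Ω → ℝ} {a : ℝ}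
    (ha : 0 < a) (ha1 : a < 1) (hu : pdf.IsUniform X (Set.Icc a 1) P) (c : ℝ) :
    P (X ⁻¹' {c}) = 0 := by
  rw [uniform_surv ha ha1 hu _ (measurableSet_singleton c)]
  have h0 : volume (Set.Icc a 1 ∩ {c}) = 0 :=
    measure_mono_null Set.inter_subset_right (Real.volume_singleton)
  rw [h0, ENNReal.zero_div]

lemma iIndepFun_ae_congr {ι Ω : Type*} [MeasurableSpace Ω] {μ : Measure Ω}
    {f g : ι → Ω → ℝ} (h : iIndepFun f μ)
    (hfg : ∀ i, f i =ᵐ[μ] g i) : iIndepFun g μ := by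
  rw [iIndepFun_iff_measure_inter_preimage_eq_mul] at h ⊢
  intro S sets hsets
  have hae : ∀ i : ι, (f i ⁻¹' sets i : Set Ω) =ᵐ[μ] (g i ⁻¹' sets i : Set Ω) := by
    intro i
    apply Filter.eventuallyEq_set.2
    filter_upwards [hfg i] with ω hω
    simp [Set.mem_preimage, hω]
  have h1 : ((⋂ i ∈ S, f i ⁻¹' sets i) : Set Ω) =ᵐ[μ] ((⋂ i ∈ S, g i ⁻¹' sets i) : Set Ω) := by
    apply Filter.eventuallyEq_set.2
    filter_upwards [(ae_ball_iff S.countable_toSet).2 (fun i _ => hfg i)] with ω hω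
    simp only [Set.mem_iInter, Set.mem_preimage]
    constructor
    · intro hmem i hi; rw [← hω i hi]; exact hmem i hi
    · intro hmem i hi; rw [hω i hi]; exact hmem i hi
  rw [← measure_congr h1, h S hsets]
  exact Finset.prod_congr rfl fun i _ => measure_congr (hae i)

lemma iInf_fin_attained {n : ℕ} (hn : 0 < n) (f : Fin n → ℝ) : ∃ i, (⨅ j, f j) = f i := by
  haveI : Nonempty (Fin n) := ⟨⟨0, hn⟩⟩
  obtain ⟨i, hi⟩ := Finite.exists_min f
  exact ⟨i, le_antisymm (ciInf_le (Set.Finite.bddBelow (Set.finite_range f)) i) (le_ciInf hi)⟩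

lemma le_iInf_fin_iff {n : ℕ} (hn : 0 < n) (f : Fin n → ℝ) (c : ℝ) :
    c ≤ ⨅ j, f j ↔ ∀ j, c ≤ f j := by
  haveI : Nonempty (Fin n) := ⟨⟨0, hn⟩⟩
  exact le_ciInf_iff (Set.Finite.bddBelow (Set.finite_range f))

lemma min_ratio_eq {a b c d : ℝ} (ha : 0 < a) (hb : 0 < b) (hc : 0 < c) (hd : 0 < d) :
    min (a / (a + b)) (c / (c + d)) = 1 - 1 / (1 + min (a / b) (c / d)) := by
  have key : ∀ x y : ℝ, 0 < x → 0 < y → x / (x + y) = 1 - 1 / (1 + x / y) := by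
    intro x y hx hy
    have h1 : 1 + x / y ≠ 0 := by positivity
    have h2 : x + y ≠ 0 := by positivity
    field_simp
    ring
  rcases le_total (a / b) (c / d) with h | h
  · rw [min_eq_left h, min_eq_left, key a b ha hb]
    rw [div_le_div_iff₀ (by positivity) (by positivity)]
    rw [div_le_div_iff₀ (by positivity) (by positivity)] at h
    nlinarith
  · rw [min_eq_right h, min_eq_right, key c d hc hd]
    rw [div_le_div_iff₀ (by positivity) (by positivity)]
    rw [div_le_div_iff₀ (by positivity) (by positivity)] at h
    nlinarith


end AuxLemmas

set_option maxHeartbeats 2000000 in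
/-- Two independent systems of uniform random variables as in Statement 3:
`Z₀ᵢ ~ Uniform[x₀,1]` (`1 ≤ i ≤ m₀`), `Zʲ ~ Uniform[x_j,1]` (`1 ≤ j ≤ k`),
`Z̄₀ᵢ ~ Uniform[x̄₀,1]` (`1 ≤ i ≤ m̄₀`), `Z̄ˡ ~ Uniform[x̄_l,1]` (`1 ≤ l ≤ k̄`), all mutually
independent, with `x₀ ≤ min_j x_j` and `x̄₀ ≤ min_l x̄_l`, all parameters in `(0,1)`. Then
`P(min Z₀ ∧ min Z̄₀ < min Z ∧ min Z̄) ≥ min(m₀/(m₀+k), m̄₀/(m̄₀+k̄))`. -/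
theorem min_uniform_comparison_two_systems
    {Ω : Type} [MeasurableSpace Ω] (P : Measure Ω) [IsProbabilityMeasure P]
    (m₀ k mb₀ kb : ℕ) (hm₀ : 0 < m₀) (hk : 0 < k) (hmb₀ : 0 < mb₀) (hkb : 0 < kb)
    (x₀ : ℝ) (x : Fin k → ℝ) (xb₀ : ℝ) (xb : Fin kb → ℝ)
    (hx₀ : x₀ ∈ Set.Ioo (0 : ℝ) 1) (hx : ∀ j, x j ∈ Set.Ioo (0 : ℝ) 1)
    (hxb₀ : xb₀ ∈ Set.Ioo (0 : ℝ) 1) (hxb : ∀ l, xb l ∈ Set.Ioo (0 : ℝ) 1)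
    (hx₀le : ∀ j, x₀ ≤ x j) (hxb₀le : ∀ l, xb₀ ≤ xb l)
    (Z₀ : Fin m₀ → Ω → ℝ) (Z : Fin k → Ω → ℝ)
    (Zb₀ : Fin mb₀ → Ω → ℝ) (Zb : Fin kb → Ω → ℝ)
    (hZ₀ : ∀ i, pdf.IsUniform (Z₀ i) (Set.Icc x₀ 1) P)
    (hZ : ∀ j, pdf.IsUniform (Z j) (Set.Icc (x j) 1) P)
    (hZb₀ : ∀ i, pdf.IsUniform (Zb₀ i) (Set.Icc xb₀ 1) P)
    (hZb : ∀ l, pdf.IsUniform (Zb l) (Set.Icc (xb l) 1) P)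
    (hindep : iIndepFun
      (Sum.elim (Sum.elim Z₀ Z) (Sum.elim Zb₀ Zb)) P) :
    ENNReal.ofReal (min ((m₀ : ℝ) / ((m₀ : ℝ) + (k : ℝ)))
        ((mb₀ : ℝ) / ((mb₀ : ℝ) + (kb : ℝ)))) ≤
      P {ω | min (⨅ i : Fin m₀, Z₀ i ω) (⨅ i : Fin mb₀, Zb₀ i ω) <
              min (⨅ j : Fin k, Z j ω) (⨅ l : Fin kb, Zb l ω)} := by
  classical
  set W : (Fin m₀ ⊕ Fin k) ⊕ (Fin mb₀ ⊕ Fin kb) → Ω → ℝ :=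
    Sum.elim (Sum.elim Z₀ Z) (Sum.elim Zb₀ Zb) with hWdef
  set τ : (Fin m₀ ⊕ Fin k) ⊕ (Fin mb₀ ⊕ Fin kb) → ℝ :=
    Sum.elim (Sum.elim (fun _ => x₀) x) (Sum.elim (fun _ => xb₀) xb) with hτdef
  have hτ : ∀ n, 0 < τ n ∧ τ n < 1 := by
    rintro ((i | j) | (i | l)) <;> simp only [hτdef, Sum.elim_inl, Sum.elim_inr]
    exacts [⟨hx₀.1, hx₀.2⟩, ⟨(hx j).1, (hx j).2⟩, ⟨hxb₀.1, hxb₀.2⟩, ⟨(hxb l).1, (hxb l).2⟩]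
  have hWu : ∀ n, pdf.IsUniform (W n) (Set.Icc (τ n) 1) P := by
    rintro ((i | j) | (i | l)) <;> simp only [hWdef, hτdef, Sum.elim_inl, Sum.elim_inr]
    exacts [hZ₀ i, hZ j, hZb₀ i, hZb l]
  have hvol0 : ∀ n, volume (Set.Icc (τ n) 1) ≠ 0 := fun n => by
    rw [Real.volume_Icc]
    simp only [ne_eq, ENNReal.ofReal_eq_zero, not_le]
    linarith [(hτ n).2]
  have hvolt : ∀ n, volume (Set.Icc (τ n) 1) ≠ ⊤ := fun n => by
    rw [Real.volume_Icc]; exact ENNReal.ofReal_ne_top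
  have hWae : ∀ n, AEMeasurable (W n) P := fun n =>
    (hWu n).aemeasurable (hvol0 n) (hvolt n)
  set W' : (Fin m₀ ⊕ Fin k) ⊕ (Fin mb₀ ⊕ Fin kb) → Ω → ℝ :=
    fun n => (hWae n).mk (W n) with hW'def
  have hW'm : ∀ n, Measurable (W' n) := fun n => (hWae n).measurable_mk
  have hWW' : ∀ n, W n =ᵐ[P] W' n := fun n => (hWae n).ae_eq_mk
  have hindep' : iIndepFun W' P := iIndepFun_ae_congr hindep hWW'
  have hW'u : ∀ n, pdf.IsUniform (W' n) (Set.Icc (τ n) 1) P := fun n => by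
    show Measure.map (W' n) P = _
    rw [← Measure.map_congr (hWW' n)]
    exact hWu n
  -- survival function
  set σ : ℝ → ℝ → ℝ≥0∞ := fun a c => ENNReal.ofReal ((1 - max a c) / (1 - a)) with hσdef
  have hsurv : ∀ n c, P (W' n ⁻¹' Set.Ici c) = σ (τ n) c := fun n c =>
    uniform_surv_Ici (hτ n).1 (hτ n).2 (hW'u n) c
  have hatomW : ∀ n c, P (W' n ⁻¹' {c}) = 0 := fun n c =>
    uniform_atom (hτ n).1 (hτ n).2 (hW'u n) c
  -- the min variables
  set U' : Ω → ℝ := fun ω => min (⨅ i : Fin m₀, W' (Sum.inl (Sum.inl i)) ω)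
    (⨅ i : Fin mb₀, W' (Sum.inr (Sum.inl i)) ω) with hU'def
  set V' : Ω → ℝ := fun ω => min (⨅ j : Fin k, W' (Sum.inl (Sum.inr j)) ω)
    (⨅ l : Fin kb, W' (Sum.inr (Sum.inr l)) ω) with hV'def
  have hU'm : Measurable U' :=
    (Measurable.iInf fun i => hW'm _).min (Measurable.iInf fun i => hW'm _)
  have hV'm : Measurable V' :=
    (Measurable.iInf fun i => hW'm _).min (Measurable.iInf fun i => hW'm _)
  -- event identification
  have hEeq : P {ω | min (⨅ i : Fin m₀, Z₀ i ω) (⨅ i : Fin mb₀, Zb₀ i ω) <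
      min (⨅ j : Fin k, Z j ω) (⨅ l : Fin kb, Zb l ω)} = P {ω | U' ω < V' ω} := by
    apply measure_congr
    apply Filter.eventuallyEq_set.2
    filter_upwards [ae_all_iff.2 hWW'] with ω hω
    have e1 : (⨅ i : Fin m₀, Z₀ i ω) = ⨅ i : Fin m₀, W' (Sum.inl (Sum.inl i)) ω :=
      iInf_congr fun i => by simpa [hWdef] using hω (Sum.inl (Sum.inl i))
    have e2 : (⨅ i : Fin mb₀, Zb₀ i ω) = ⨅ i : Fin mb₀, W' (Sum.inr (Sum.inl i)) ω :=
      iInf_congr fun i => by simpa [hWdef] using hω (Sum.inr (Sum.inl i))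
    have e3 : (⨅ j : Fin k, Z j ω) = ⨅ j : Fin k, W' (Sum.inl (Sum.inr j)) ω :=
      iInf_congr fun j => by simpa [hWdef] using hω (Sum.inl (Sum.inr j))
    have e4 : (⨅ l : Fin kb, Zb l ω) = ⨅ l : Fin kb, W' (Sum.inr (Sum.inr l)) ω :=
      iInf_congr fun l => by simpa [hWdef] using hω (Sum.inr (Sum.inr l))
    simp only [Set.mem_setOf_eq, hU'def, hV'def, e1, e2, e3, e4]
  -- complement
  have hcompl : P {ω | U' ω < V' ω} = 1 - P {ω | V' ω ≤ U' ω} := by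
    have hsetc : {ω | V' ω ≤ U' ω}ᶜ = {ω | U' ω < V' ω} := by
      ext ω; simp [not_le]
    rw [← hsetc, prob_compl_eq_one_sub (measurableSet_le hV'm hU'm)]
  -- finsets
  set S : Finset ((Fin m₀ ⊕ Fin k) ⊕ (Fin mb₀ ⊕ Fin kb)) :=
    (Finset.univ.image fun i : Fin m₀ => ((Sum.inl (Sum.inl i)) : (Fin m₀ ⊕ Fin k) ⊕ (Fin mb₀ ⊕ Fin kb))) ∪
    (Finset.univ.image fun i : Fin mb₀ => Sum.inr (Sum.inl i)) with hSdef
  set T : Finset ((Fin m₀ ⊕ Fin k) ⊕ (Fin mb₀ ⊕ Fin kb)) :=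
    (Finset.univ.image fun j : Fin k => ((Sum.inl (Sum.inr j)) : (Fin m₀ ⊕ Fin k) ⊕ (Fin mb₀ ⊕ Fin kb))) ∪
    (Finset.univ.image fun l : Fin kb => Sum.inr (Sum.inr l)) with hTdef
  -- survival products
  have hdisjS : Disjoint (Finset.univ.image fun i : Fin m₀ =>
      ((Sum.inl (Sum.inl i)) : (Fin m₀ ⊕ Fin k) ⊕ (Fin mb₀ ⊕ Fin kb)))
      (Finset.univ.image fun i : Fin mb₀ => ((Sum.inr (Sum.inl i)) : (Fin m₀ ⊕ Fin k) ⊕ (Fin mb₀ ⊕ Fin kb))) := by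
    rw [Finset.disjoint_left]
    rintro a ha hb
    simp only [Finset.mem_image, Finset.mem_univ, true_and] at ha hb
    obtain ⟨i, rfl⟩ := ha
    obtain ⟨i', h⟩ := hb
    simp at h
  have hdisjT : Disjoint (Finset.univ.image fun j : Fin k =>
      ((Sum.inl (Sum.inr j)) : (Fin m₀ ⊕ Fin k) ⊕ (Fin mb₀ ⊕ Fin kb)))
      (Finset.univ.image fun l : Fin kb => ((Sum.inr (Sum.inr l)) : (Fin m₀ ⊕ Fin k) ⊕ (Fin mb₀ ⊕ Fin kb))) := by
    rw [Finset.disjoint_left]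
    rintro a ha hb
    simp only [Finset.mem_image, Finset.mem_univ, true_and] at ha hb
    obtain ⟨i, rfl⟩ := ha
    obtain ⟨i', h⟩ := hb
    simp at h
  have hUset : ∀ c : ℝ, U' ⁻¹' Set.Ici c = ⋂ n ∈ S, W' n ⁻¹' Set.Ici c := by
    intro c
    ext ω
    simp only [Set.mem_preimage, Set.mem_Ici, hU'def, le_min_iff, Set.mem_iInter, hSdef,
      Finset.mem_union, Finset.mem_image, Finset.mem_univ, true_and]
    rw [le_iInf_fin_iff hm₀, le_iInf_fin_iff hmb₀]
    constructor
    · rintro ⟨h1, h2⟩ n (⟨i, rfl⟩ | ⟨i, rfl⟩)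
      exacts [h1 i, h2 i]
    · intro h
      exact ⟨fun i => h _ (Or.inl ⟨i, rfl⟩), fun i => h _ (Or.inr ⟨i, rfl⟩)⟩
  have hVset : ∀ c : ℝ, V' ⁻¹' Set.Ici c = ⋂ n ∈ T, W' n ⁻¹' Set.Ici c := by
    intro c
    ext ω
    simp only [Set.mem_preimage, Set.mem_Ici, hV'def, le_min_iff, Set.mem_iInter, hTdef,
      Finset.mem_union, Finset.mem_image, Finset.mem_univ, true_and]
    rw [le_iInf_fin_iff hk, le_iInf_fin_iff hkb]
    constructor
    · rintro ⟨h1, h2⟩ n (⟨i, rfl⟩ | ⟨i, rfl⟩)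
      exacts [h1 i, h2 i]
    · intro h
      exact ⟨fun i => h _ (Or.inl ⟨i, rfl⟩), fun i => h _ (Or.inr ⟨i, rfl⟩)⟩
  have hinj1 : ∀ (a : Fin m₀), ∀ (b : Fin m₀),
      ((Sum.inl (Sum.inl a)) : (Fin m₀ ⊕ Fin k) ⊕ (Fin mb₀ ⊕ Fin kb)) = Sum.inl (Sum.inl b) → a = b := by
    intro a b h; simpa using h
  have hUsurv : ∀ c : ℝ, P (U' ⁻¹' Set.Ici c) = σ x₀ c ^ m₀ * σ xb₀ c ^ mb₀ := by
    intro c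
    rw [hUset c,
      (iIndepFun_iff_measure_inter_preimage_eq_mul.1 hindep') S (fun _ _ => measurableSet_Ici),
      hSdef, Finset.prod_union hdisjS,
      Finset.prod_image (fun a _ b _ h => by simpa using h),
      Finset.prod_image (fun a _ b _ h => by simpa using h)]
    simp only [hsurv, hτdef, Sum.elim_inl, Sum.elim_inr]
    rw [Finset.prod_const, Finset.prod_const, Finset.card_univ, Finset.card_univ,
      Fintype.card_fin, Fintype.card_fin]
  have hVsurv : ∀ c : ℝ, P (V' ⁻¹' Set.Ici c)
      = (∏ j : Fin k, σ (x j) c) * ∏ l : Fin kb, σ (xb l) c := by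
    intro c
    rw [hVset c,
      (iIndepFun_iff_measure_inter_preimage_eq_mul.1 hindep') T (fun _ _ => measurableSet_Ici),
      hTdef, Finset.prod_union hdisjT,
      Finset.prod_image (fun a _ b _ h => by simpa using h),
      Finset.prod_image (fun a _ b _ h => by simpa using h)]
    simp only [hsurv, hτdef, Sum.elim_inl, Sum.elim_inr]
  -- independence of U' and V'
  have hST : Disjoint S T := by
    rw [Finset.disjoint_left]
    rintro a ha hb
    simp only [hSdef, hTdef, Finset.mem_union, Finset.mem_image, Finset.mem_univ, true_and]
      at ha hb
    rcases ha with ⟨i, rfl⟩ | ⟨i, rfl⟩ <;> rcases hb with ⟨j, h⟩ | ⟨j, h⟩ <;> simp at h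
  have hmS1 : ∀ i : Fin m₀,
      ((Sum.inl (Sum.inl i)) : (Fin m₀ ⊕ Fin k) ⊕ (Fin mb₀ ⊕ Fin kb)) ∈ S := fun i => by
    simp [hSdef]
  have hmS2 : ∀ i : Fin mb₀,
      ((Sum.inr (Sum.inl i)) : (Fin m₀ ⊕ Fin k) ⊕ (Fin mb₀ ⊕ Fin kb)) ∈ S := fun i => by
    simp [hSdef]
  have hmT1 : ∀ j : Fin k,
      ((Sum.inl (Sum.inr j)) : (Fin m₀ ⊕ Fin k) ⊕ (Fin mb₀ ⊕ Fin kb)) ∈ T := fun j => by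
    simp [hTdef]
  have hmT2 : ∀ l : Fin kb,
      ((Sum.inr (Sum.inr l)) : (Fin m₀ ⊕ Fin k) ⊕ (Fin mb₀ ⊕ Fin kb)) ∈ T := fun l => by
    simp [hTdef]
  have hUV : IndepFun U' V' P := by
    have hbase := hindep'.indepFun_finset S T hST hW'm
    have hgUm : Measurable (fun u : ({n // n ∈ S} → ℝ) =>
        min (⨅ i : Fin m₀, u ⟨Sum.inl (Sum.inl i), hmS1 i⟩)
          (⨅ i : Fin mb₀, u ⟨Sum.inr (Sum.inl i), hmS2 i⟩)) := by
      apply Measurable.min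
      · exact Measurable.iInf fun i => measurable_pi_apply (⟨Sum.inl (Sum.inl i), hmS1 i⟩ : {n // n ∈ S})
      · exact Measurable.iInf fun i => measurable_pi_apply (⟨Sum.inr (Sum.inl i), hmS2 i⟩ : {n // n ∈ S})
    have hgVm : Measurable (fun u : ({n // n ∈ T} → ℝ) =>
        min (⨅ j : Fin k, u ⟨Sum.inl (Sum.inr j), hmT1 j⟩)
          (⨅ l : Fin kb, u ⟨Sum.inr (Sum.inr l), hmT2 l⟩)) := by
      apply Measurable.min
      · exact Measurable.iInf fun j => measurable_pi_apply (⟨Sum.inl (Sum.inr j), hmT1 j⟩ : {n // n ∈ T})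
      · exact Measurable.iInf fun l => measurable_pi_apply (⟨Sum.inr (Sum.inr l), hmT2 l⟩ : {n // n ∈ T})
    exact hbase.comp hgUm hgVm
  haveI hprobV : IsProbabilityMeasure (P.map V') := Measure.isProbabilityMeasure_map hV'm.aemeasurable
  -- atomlessness of the law of V'
  have hatomV : ∀ c : ℝ, (P.map V') {c} = 0 := by
    intro c
    rw [Measure.map_apply hV'm (measurableSet_singleton c)]
    have hsub : V' ⁻¹' {c} ⊆ (⋃ j : Fin k, W' (Sum.inl (Sum.inr j)) ⁻¹' {c}) ∪
        ⋃ l : Fin kb, W' (Sum.inr (Sum.inr l)) ⁻¹' {c} := by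
      intro ω hω
      have hV : min (⨅ j : Fin k, W' (Sum.inl (Sum.inr j)) ω)
          (⨅ l : Fin kb, W' (Sum.inr (Sum.inr l)) ω) = c := hω
      obtain ⟨j, hj⟩ := iInf_fin_attained hk (fun j => W' (Sum.inl (Sum.inr j)) ω)
      obtain ⟨l, hl⟩ := iInf_fin_attained hkb (fun l => W' (Sum.inr (Sum.inr l)) ω)
      rcases min_cases (⨅ j : Fin k, W' (Sum.inl (Sum.inr j)) ω)
        (⨅ l : Fin kb, W' (Sum.inr (Sum.inr l)) ω) with ⟨he, _⟩ | ⟨he, _⟩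
      · left
        refine Set.mem_iUnion.2 ⟨j, ?_⟩
        rw [Set.mem_preimage, Set.mem_singleton_iff, ← hj, ← he]
        exact hV
      · right
        refine Set.mem_iUnion.2 ⟨l, ?_⟩
        rw [Set.mem_preimage, Set.mem_singleton_iff, ← hl, ← he]
        exact hV
    refine measure_mono_null hsub ?_
    exact measure_union_null (measure_iUnion_null fun j => hatomW _ c)
      (measure_iUnion_null fun l => hatomW _ c)
  -- numeric setup
  have hm₀' : (0:ℝ) < m₀ := by exact_mod_cast hm₀
  have hk' : (0:ℝ) < k := by exact_mod_cast hk
  have hmb₀' : (0:ℝ) < mb₀ := by exact_mod_cast hmb₀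
  have hkb' : (0:ℝ) < kb := by exact_mod_cast hkb
  set β : ℝ := min ((m₀:ℝ)/(k:ℝ)) ((mb₀:ℝ)/(kb:ℝ)) with hβdef
  have hβ : 0 < β := lt_min (by positivity) (by positivity)
  -- pointwise survival comparison
  have hpoint : ∀ c : ℝ, (P.map U') (Set.Ici c) ≤ ((P.map V') (Set.Ici c)) ^ β := by
    intro c
    rw [Measure.map_apply hU'm measurableSet_Ici, Measure.map_apply hV'm measurableSet_Ici,
      hUsurv c, hVsurv c]
    have hbound : ∀ (n m : ℕ) (a : ℝ) (y : Fin n → ℝ) (γ : ℝ), 0 < n → 0 < a →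
        (∀ j, y j < 1) → (∀ j, a ≤ y j) → γ ≤ (m:ℝ)/(n:ℝ) → 0 < γ →
        σ a c ^ m ≤ (∏ j : Fin n, σ (y j) c) ^ γ := by
      intro n m a y γ hn ha hy1 hay hγle hγ
      have hn' : (0:ℝ) < n := by exact_mod_cast hn
      have ha1 : a < 1 := lt_of_le_of_lt (hay ⟨0, hn⟩) (hy1 ⟨0, hn⟩)
      have hq0k : σ a c ^ n ≤ ∏ j : Fin n, σ (y j) c := by
        calc σ a c ^ n = ∏ _j : Fin n, σ a c := by
              rw [Finset.prod_const, Finset.card_univ, Fintype.card_fin]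
          _ ≤ ∏ j : Fin n, σ (y j) c :=
              Finset.prod_le_prod' fun j _ => surv_mono ha (hy1 j) (hay j)
      have hQ1 : (∏ j : Fin n, σ (y j) c) ≤ 1 :=
        Finset.prod_le_one' fun j _ => surv_le_one (hy1 j)
      calc σ a c ^ m = (σ a c ^ (n:ℝ)) ^ ((m:ℝ)/(n:ℝ)) := by
            rw [← ENNReal.rpow_natCast (σ a c) m, ← ENNReal.rpow_mul]
            congr 1
            field_simp
        _ ≤ (∏ j : Fin n, σ (y j) c) ^ ((m:ℝ)/(n:ℝ)) := by
            refine ENNReal.rpow_le_rpow ?_ (by positivity)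
            rw [ENNReal.rpow_natCast]
            exact hq0k
        _ ≤ (∏ j : Fin n, σ (y j) c) ^ γ :=
            ENNReal.rpow_le_rpow_of_exponent_ge hQ1 hγle
    have h1 := hbound k m₀ x₀ x β hk hx₀.1 (fun j => (hx j).2) hx₀le (min_le_left _ _) hβ
    have h2 := hbound kb mb₀ xb₀ xb β hkb hxb₀.1 (fun l => (hxb l).2) hxb₀le (min_le_right _ _) hβ
    calc σ x₀ c ^ m₀ * σ xb₀ c ^ mb₀
        ≤ (∏ j : Fin k, σ (x j) c) ^ β * (∏ l : Fin kb, σ (xb l) c) ^ β := mul_le_mul' h1 h2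
      _ = ((∏ j : Fin k, σ (x j) c) * ∏ l : Fin kb, σ (xb l) c) ^ β :=
          (ENNReal.mul_rpow_of_nonneg _ _ hβ.le).symm
  -- the main bound
  have hPle : P {ω | V' ω ≤ U' ω} ≤ ENNReal.ofReal (1/(1+β)) := by
    have hs : MeasurableSet {p : ℝ × ℝ | p.2 ≤ p.1} :=
      measurableSet_le measurable_snd measurable_fst
    have h1 : P {ω | V' ω ≤ U' ω} = P.map (fun ω => (U' ω, V' ω)) {p : ℝ × ℝ | p.2 ≤ p.1} := by
      rw [Measure.map_apply (hU'm.prodMk hV'm) hs]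
      rfl
    have hmapprod : P.map (fun ω => (U' ω, V' ω)) = (P.map U').prod (P.map V') :=
      (indepFun_iff_map_prod_eq_prod_map_map hU'm.aemeasurable hV'm.aemeasurable).1 hUV
    rw [h1, hmapprod, Measure.prod_apply_symm hs]
    have hpre : ∀ c : ℝ, ((fun u => (u, c)) ⁻¹' {p : ℝ × ℝ | p.2 ≤ p.1}) = Set.Ici c :=
      fun c => rfl
    simp_rw [hpre]
    calc ∫⁻ c, (P.map U') (Set.Ici c) ∂(P.map V')
        ≤ ∫⁻ c, ((P.map V') (Set.Ici c)) ^ β ∂(P.map V') := lintegral_mono hpoint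
      _ ≤ ENNReal.ofReal (1/(1+β)) := tail_rpow_lintegral_le _ hatomV hβ
  -- final arithmetic
  rw [hEeq, hcompl]
  have harith : min ((m₀:ℝ)/((m₀:ℝ)+(k:ℝ))) ((mb₀:ℝ)/((mb₀:ℝ)+(kb:ℝ))) = 1 - 1/(1+β) := by
    rw [hβdef]
    exact min_ratio_eq hm₀' hk' hmb₀' hkb'
  rw [harith]
  have h2 : ENNReal.ofReal (1 - 1/(1+β)) = 1 - ENNReal.ofReal (1/(1+β)) := by
    rw [ENNReal.ofReal_sub 1 (by positivity), ENNReal.ofReal_one]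
  rw [h2]
  exact tsub_le_tsub_left hPle 1
end

section
/- Under Assumption 2.3, there exist C > 0, κ₀ ∈ (0, 1/4), and n₀ ≥ 2, all depending only on (A₁, A₂, τ, ν), such that for all n ≥ n₀, all κ ∈ (0, κ₀], and all (λ, u) ∈ I_κ^{(n),2}: φ_λ^{(n)}(κu)/φ_λ^{(n)}(u) ≤ φ_λ^{(n)}((1−κ)u)/φ_λ^{(n)}(u) ≤ 1/(1 + Cκ). -/
open scoped Classical
open MeasureTheory ProbabilityTheory Filter

noncomputable section

/-- `α = 1/(τ−1)`. -/
def alphaExp (τ : ℝ) : ℝ := 1 / (τ - 1)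

/-- `ρ = (τ−2)/(τ−1)`. -/
def rhoExp (τ : ℝ) : ℝ := (τ - 2) / (τ - 1)

/-- `η = (τ−3)/(τ−1)`. -/
def etaExp (τ : ℝ) : ℝ := (τ - 3) / (τ - 1)

/-- `L_n = Σ_{i=1}^n w_i^{(n)}`. -/
def Lseq (w : ℕ → ℕ → ℝ) (n : ℕ) : ℝ := ∑ i ∈ Finset.Icc 1 n, w n i

/-- `ℓ_n = Σ_{i=2}^n w_i^{(n)}`. -/
def ellSeq (w : ℕ → ℕ → ℝ) (n : ℕ) : ℝ := ∑ i ∈ Finset.Icc 2 n, w n i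

/-- `σ₂^{(n)} = n^{−1} Σ_{i=2}^n (w_i^{(n)})²`. -/
def sigma2 (w : ℕ → ℕ → ℝ) (n : ℕ) : ℝ := (∑ i ∈ Finset.Icc 2 n, (w n i) ^ 2) / (n : ℝ)

/-- `ν_n = n σ₂^{(n)}/ℓ_n`. -/
def nuSeq (w : ℕ → ℕ → ℝ) (n : ℕ) : ℝ := (n : ℝ) * sigma2 w n / ellSeq w n

/-- `p^n_λ = (1 + λ n^{−η})/ν_n`. -/
def pEdge (τ : ℝ) (w : ℕ → ℕ → ℝ) (n : ℕ) (lam : ℝ) : ℝ :=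
  (1 + lam / (n : ℝ) ^ etaExp τ) / nuSeq w n

/-- `θ_{j,λ}^{(n)} = (1 + λ n^{−η}) w_j^{(n)}/(n^α (σ₂^{(n)})^{1/2})`. -/
def thetaSeq (τ : ℝ) (w : ℕ → ℕ → ℝ) (n : ℕ) (lam : ℝ) (j : ℕ) : ℝ :=
  (1 + lam / (n : ℝ) ^ etaExp τ) * w n j / ((n : ℝ) ^ alphaExp τ * Real.sqrt (sigma2 w n))

/-- `Φ_λ^{(n)}(u) = λu − (1 + λ n^{−η})^{−1} Σ_{j=2}^n θ_{j,λ}(uθ_{j,λ} + e^{−uθ_{j,λ}} − 1)`. -/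
def PhiFn (τ : ℝ) (w : ℕ → ℕ → ℝ) (n : ℕ) (lam : ℝ) (u : ℝ) : ℝ :=
  lam * u - (1 + lam / (n : ℝ) ^ etaExp τ)⁻¹ *
    ∑ j ∈ Finset.Icc 2 n,
      thetaSeq τ w n lam j *
        (u * thetaSeq τ w n lam j + Real.exp (-(u * thetaSeq τ w n lam j)) - 1)

/-- `φ_λ^{(n)}(u) = Σ_{j=2}^n θ_{j,λ}² (uθ_{j,λ} + e^{−uθ_{j,λ}} − 1)/(uθ_{j,λ})`. -/
def phiFn (τ : ℝ) (w : ℕ → ℕ → ℝ) (n : ℕ) (lam : ℝ) (u : ℝ) : ℝ :=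
  ∑ j ∈ Finset.Icc 2 n,
    (thetaSeq τ w n lam j) ^ 2 *
      (u * thetaSeq τ w n lam j + Real.exp (-(u * thetaSeq τ w n lam j)) - 1) /
        (u * thetaSeq τ w n lam j)

/-- Assumption 2.3 of the paper for a triangular array of weights `w n i` (`1 ≤ i ≤ n`),
with degree exponent `τ ∈ (3,4)`, constants `A₁, A₂ > 0`, supercriticality parameter `ν > 1`
and limiting rescaled weights `θstar`. -/
structure Assumption23 (τ A₁ A₂ ν : ℝ) (θstar : ℕ → ℝ) (w : ℕ → ℕ → ℝ) : Prop where
  tau_gt : 3 < τ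
  tau_lt : τ < 4
  A1_pos : 0 < A₁
  A2_pos : 0 < A₂
  nu_gt_one : 1 < ν
  wpos : ∀ n : ℕ, 1 ≤ n → ∀ i ∈ Finset.Icc 1 n, 0 < w n i
  wmono : ∀ n : ℕ, 1 ≤ n → ∀ i j : ℕ, 1 ≤ i → i ≤ j → j ≤ n → w n j ≤ w n i
  supercrit :
    Filter.liminf (fun n : ℕ => (∑ j ∈ Finset.Icc 1 n, (w n j) ^ 2) / Lseq w n) Filter.atTop = ν
  theta_pos : ∀ i : ℕ, 1 ≤ i → 0 < θstar i
  theta_lim : ∀ i : ℕ, 1 ≤ i →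
    Filter.Tendsto
      (fun n : ℕ => w n i / (n : ℝ) ^ alphaExp τ *
        Real.sqrt ((n : ℝ) / ∑ j ∈ Finset.Icc 1 n, (w n j) ^ 2))
      Filter.atTop (nhds (θstar i))
  wlb : ∀ n : ℕ, 2 ≤ n → ∀ i : ℕ, 1 ≤ i → 2 * i ≤ n →
    A₁ * ((n : ℝ) / (i : ℝ)) ^ alphaExp τ ≤ w n i
  wub : ∀ n : ℕ, 2 ≤ n → ∀ i : ℕ, 1 ≤ i → 2 * i ≤ n →
    w n i ≤ A₂ * ((n : ℝ) / (i : ℝ)) ^ alphaExp τ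
  wnlb : ∀ n : ℕ, 2 ≤ n →
    A₁ * Real.log n ^ ((3 : ℝ) / 2) * (n : ℝ) ^ (-(etaExp τ / 4)) ≤ w n n

/-- Assumption 6.1: `ν_n ≥ ν' := 1 + (ν−1)/2` for all `n`. -/
def Assumption61 (ν : ℝ) (w : ℕ → ℕ → ℝ) : Prop :=
  ∀ n : ℕ, 1 ≤ n → 1 + (ν - 1) / 2 ≤ nuSeq w n

/-- Index type for the (unordered) pairs `1 ≤ i < j ≤ n`. -/
def EdgeIdx (n : ℕ) : Type := {p : ℕ × ℕ // 1 ≤ p.1 ∧ p.1 < p.2 ∧ p.2 ≤ n}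

/-- `X` is (a version of) the random graph `G_n(λ)` on vertex set `{1, …, n}`: edges appear
independently, the edge `{i,j}` (for `1 ≤ i < j ≤ n`) with probability
`1 − exp(−p^n_λ w_i w_j/ℓ_n)`, and there are no other edges. -/
def IsGnLambda {Ω : Type} [MeasurableSpace Ω] (P : Measure Ω)
    (τ : ℝ) (w : ℕ → ℕ → ℝ) (n : ℕ) (lam : ℝ) (X : Ω → SimpleGraph ℕ) : Prop :=
  (∀ ω i j, (X ω).Adj i j → i ∈ Finset.Icc 1 n ∧ j ∈ Finset.Icc 1 n) ∧
  (∀ i j : ℕ, 1 ≤ i → i < j → j ≤ n →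
    P {ω | (X ω).Adj i j} =
      ENNReal.ofReal (1 - Real.exp (-(pEdge τ w n lam * w n i * w n j / ellSeq w n)))) ∧
  iIndepSet (fun e : EdgeIdx n => {ω | (X ω).Adj e.1.1 e.1.2}) P

/-- The weight `𝒲(C(1,G)) = Σ_{i ∈ C(1,G)} w_i` of the component of vertex `1` in `G`. -/
def compWeight (w : ℕ → ℕ → ℝ) (n : ℕ) (G : SimpleGraph ℕ) : ℝ :=
  ∑ i ∈ Finset.Icc 1 n, if G.Reachable 1 i then w n i else 0


namespace PhiRatioAux

/-- The basic ratio function `F x = (x + e^{-x} - 1)/x`. -/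
def F (x : ℝ) : ℝ := (x + Real.exp (-x) - 1) / x

lemma exp_quartic {x : ℝ} (hx : 0 ≤ x) :
    1 + x + x ^ 2 / 2 + x ^ 3 / 6 + x ^ 4 / 24 ≤ Real.exp x := by
  have h := Real.sum_le_exp_of_nonneg hx 5
  rw [Finset.sum_range_succ, Finset.sum_range_succ, Finset.sum_range_succ,
    Finset.sum_range_succ, Finset.sum_range_succ] at h
  norm_num [Nat.factorial] at h
  linarith

lemma exp_quadratic {x : ℝ} (hx : 0 ≤ x) :
    1 + x + x ^ 2 / 2 ≤ Real.exp x := by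
  have h := Real.sum_le_exp_of_nonneg hx 3
  rw [Finset.sum_range_succ, Finset.sum_range_succ, Finset.sum_range_succ] at h
  norm_num [Nat.factorial] at h
  linarith

lemma keyA {x : ℝ} (hx : 0 ≤ x) (hx2 : x ≤ 2) :
    (1 + x) * Real.exp (-x) ≤ 1 - x ^ 2 / 9 := by
  have hQ := exp_quartic hx
  have hex : 0 < Real.exp x := Real.exp_pos x
  have h9 : (0:ℝ) ≤ 1 - x ^ 2 / 9 := by nlinarith
  have key : 1 + x ≤ (1 - x ^ 2 / 9) * Real.exp x := by
    have h1 : 1 + x ≤ (1 - x ^ 2 / 9) * (1 + x + x ^ 2 / 2 + x ^ 3 / 6 + x ^ 4 / 24) := by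
      nlinarith [pow_nonneg hx 2, pow_nonneg hx 3, pow_nonneg hx 4, pow_nonneg hx 5,
        pow_nonneg hx 6, mul_nonneg (pow_nonneg hx 2) (sub_nonneg.2 hx2),
        mul_nonneg (pow_nonneg hx 3) (sub_nonneg.2 hx2),
        mul_nonneg (pow_nonneg hx 4) (sub_nonneg.2 hx2),
        mul_nonneg (pow_nonneg hx 5) (sub_nonneg.2 hx2)]
    calc 1 + x ≤ (1 - x ^ 2 / 9) * (1 + x + x ^ 2 / 2 + x ^ 3 / 6 + x ^ 4 / 24) := h1
    _ ≤ (1 - x ^ 2 / 9) * Real.exp x := by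
        exact mul_le_mul_of_nonneg_left hQ h9
  rw [Real.exp_neg]
  rw [mul_inv_le_iff₀ hex]
  linarith [key]

lemma hasDerivAt_h {t : ℝ} (ht : t ≠ 0) :
    HasDerivAt (fun x : ℝ => (1 - Real.exp (-x)) / x)
      (((1 + t) * Real.exp (-t) - 1) / t ^ 2) t := by
  have h2 : HasDerivAt (fun x : ℝ => Real.exp (-x)) (-Real.exp (-t)) t := by
    simpa using (hasDerivAt_neg t).exp
  have h1 : HasDerivAt (fun x : ℝ => 1 - Real.exp (-x)) (Real.exp (-t)) t := by
    simpa using h2.const_sub 1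
  have h3 : HasDerivAt (fun x : ℝ => (1 - Real.exp (-x)) / x)
      ((Real.exp (-t) * t - (1 - Real.exp (-t)) * 1) / t ^ 2) t := h1.div (hasDerivAt_id' t) ht
  convert h3 using 1
  ring

lemma F_eq {x : ℝ} (hx : x ≠ 0) : F x = 1 - (1 - Real.exp (-x)) / x := by
  unfold F
  field_simp
  ring

lemma F_pos {x : ℝ} (hx : 0 < x) : 0 < F x := by
  have h := Real.add_one_lt_exp (x := -x) (by intro h; linarith [h ▸ hx] : (-x) ≠ 0)
  have hnum : 0 < x + Real.exp (-x) - 1 := by linarith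
  exact div_pos hnum hx

lemma F_le_one {x : ℝ} (hx : 0 < x) : F x ≤ 1 := by
  have h : Real.exp (-x) ≤ 1 := Real.exp_le_one_iff.2 (by linarith)
  unfold F
  rw [div_le_one hx]
  linarith

lemma F_le_half {x : ℝ} (hx : 0 < x) : F x ≤ x / 2 := by
  have hQ := exp_quadratic hx.le
  have hex : 0 < Real.exp x := Real.exp_pos x
  have hpos : 0 < 1 - x + x ^ 2 / 2 := by nlinarith [sq_nonneg (x - 1)]
  have key : Real.exp (-x) ≤ 1 - x + x ^ 2 / 2 := by
    rw [Real.exp_neg, inv_le_iff_one_le_mul₀ hex]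
    calc (1:ℝ) ≤ (1 - x + x ^ 2 / 2) * (1 + x + x ^ 2 / 2) := by nlinarith [pow_nonneg hx.le 4]
    _ ≤ (1 - x + x ^ 2 / 2) * Real.exp x := by
        exact mul_le_mul_of_nonneg_left hQ hpos.le
  unfold F
  rw [div_le_iff₀ hx]
  nlinarith

lemma quarter_le_F {x : ℝ} (hx : 0 < x) (hx2 : x ≤ 2) : x / 4 ≤ F x := by
  have h14 : (0:ℝ) < 1 - x / 4 := by linarith
  have hb : 1 - x / 4 ≤ Real.exp (-(x / 4)) := by
    linarith [Real.add_one_le_exp (-(x / 4))]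
  have hq : (1 - x / 4) ^ 4 ≤ Real.exp (-x) := by
    have h4 : Real.exp (-x) = Real.exp (-(x / 4)) ^ 4 := by
      rw [← Real.exp_nat_mul]
      norm_num
      ring
    rw [h4]
    have := pow_le_pow_left₀ h14.le hb 4
    exact this
  have hpoly : 1 - x + x ^ 2 / 4 ≤ (1 - x / 4) ^ 4 := by nlinarith [sq_nonneg x, pow_nonneg hx.le 3, pow_nonneg hx.le 4]
  have key : 1 - x + x ^ 2 / 4 ≤ Real.exp (-x) := hpoly.trans hq
  unfold F
  rw [le_div_iff₀ hx]
  nlinarith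

lemma h_anti {a b : ℝ} (ha : 0 < a) (hab : a ≤ b) :
    (1 - Real.exp (-b)) / b ≤ (1 - Real.exp (-a)) / a := by
  have hanti : AntitoneOn (fun x : ℝ => (1 - Real.exp (-x)) / x) (Set.Icc a b) := by
    apply antitoneOn_of_deriv_nonpos (convex_Icc a b)
    · apply ContinuousOn.div
      · fun_prop
      · fun_prop
      · intro x hx; exact ne_of_gt (lt_of_lt_of_le ha hx.1)
    · intro x hx
      rw [interior_Icc] at hx
      exact ((hasDerivAt_h (ne_of_gt (ha.trans hx.1))).differentiableAt).differentiableWithinAt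
    · intro x hx
      rw [interior_Icc] at hx
      have hx0 : 0 < x := ha.trans hx.1
      rw [(hasDerivAt_h hx0.ne').deriv]
      apply div_nonpos_of_nonpos_of_nonneg _ (sq_nonneg x)
      have h1 : (1 + x) * Real.exp (-x) ≤ 1 := by
        have := Real.add_one_le_exp x
        have hex : (0:ℝ) < Real.exp x := Real.exp_pos x
        rw [Real.exp_neg, mul_inv_le_iff₀ hex]
        linarith
      linarith
  exact hanti (Set.left_mem_Icc.2 hab) (Set.right_mem_Icc.2 hab) hab

lemma F_mono {a b : ℝ} (ha : 0 < a) (hab : a ≤ b) : F a ≤ F b := by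
  rw [F_eq ha.ne', F_eq (ha.trans_le hab).ne']
  linarith [h_anti ha hab]

lemma F_gap {y x : ℝ} (hy : 0 < y) (hyx : y < x) (hx2 : x ≤ 2) :
    (x - y) / 9 ≤ F x - F y := by
  have hanti : AntitoneOn (fun t : ℝ => (1 - Real.exp (-t)) / t + t / 9) (Set.Icc y x) := by
    apply antitoneOn_of_deriv_nonpos (convex_Icc y x)
    · apply ContinuousOn.add
      · apply ContinuousOn.div
        · fun_prop
        · fun_prop
        · intro z hz; exact ne_of_gt (lt_of_lt_of_le hy hz.1)
      · fun_prop
    · intro z hz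
      rw [interior_Icc] at hz
      have hz0 : 0 < z := hy.trans hz.1
      have hid : HasDerivAt (fun t : ℝ => t / 9) ((1:ℝ)/9) z := (hasDerivAt_id z).div_const 9
      exact (((hasDerivAt_h hz0.ne').add hid).differentiableAt).differentiableWithinAt
    · intro z hz
      rw [interior_Icc] at hz
      have hz0 : 0 < z := hy.trans hz.1
      have hz2 : z ≤ 2 := le_of_lt (lt_of_lt_of_le hz.2 hx2)
      have hid : HasDerivAt (fun t : ℝ => t / 9) ((1:ℝ)/9) z := (hasDerivAt_id z).div_const 9
      have hd : HasDerivAt (fun t : ℝ => (1 - Real.exp (-t)) / t + t / 9) _ z := (hasDerivAt_h hz0.ne').add hid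
      rw [hd.deriv]
      have hk := keyA hz0.le hz2
      have hz2' : (0:ℝ) < z ^ 2 := by positivity
      have : ((1 + z) * Real.exp (-z) - 1) / z ^ 2 ≤ -1 / 9 := by
        rw [div_le_div_iff₀ hz2' (by norm_num : (0:ℝ) < 9)]
        nlinarith
      norm_num at this ⊢
      linarith
  have h := hanti (Set.left_mem_Icc.2 hyx.le) (Set.right_mem_Icc.2 hyx.le) hyx.le
  rw [F_eq hy.ne', F_eq (hy.trans hyx).ne']
  simp only at h
  linarith

lemma bernoulli_rpow {p t : ℝ} (hp0 : 0 ≤ p) (hp1 : p ≤ 1) (ht0 : 0 ≤ t) (ht1 : t ≤ 1) :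
    (1 - t) ^ p ≤ 1 - p * t := by
  have h := Real.geom_mean_le_arith_mean2_weighted hp0 (by linarith : (0:ℝ) ≤ 1 - p)
    (by linarith : (0:ℝ) ≤ 1 - t) zero_le_one (by ring)
  rw [Real.one_rpow] at h
  calc (1 - t) ^ p = (1 - t) ^ p * 1 := (mul_one _).symm
  _ ≤ p * (1 - t) + (1 - p) * 1 := h
  _ = 1 - p * t := by ring

lemma sum_rpow_neg_le {β : ℝ} (hβ0 : 0 < β) (hβ1 : β < 1) :
    ∀ b : ℕ, 1 ≤ b → ∑ j ∈ Finset.Icc 1 b, ((j : ℝ)) ^ (-β) ≤ (b : ℝ) ^ (1 - β) / (1 - β) := by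
  intro b
  induction b with
  | zero => intro h; omega
  | succ b ih =>
    intro _
    rcases Nat.lt_or_ge b 1 with hb1 | hb1
    · interval_cases b
      simp only [Finset.Icc_self, Finset.sum_singleton, Nat.cast_one, Real.one_rpow]
      rw [le_div_iff₀ (by linarith)]
      norm_num [Real.one_rpow]
      linarith
    · have hbr : (1:ℝ) ≤ (b : ℝ) := by exact_mod_cast hb1
      have hc : (0:ℝ) < (b : ℝ) + 1 := by linarith
      have h1β : (0:ℝ) < 1 - β := by linarith
      have h3 : ((b:ℝ)+1) ^ (-β) = ((b:ℝ)+1) ^ (1-β) / ((b:ℝ)+1) := by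
        rw [← Real.rpow_sub_one hc.ne' (1-β)]
        norm_num
      have hstep : (1 - β) * (((b:ℝ) + 1) ^ (-β)) ≤ ((b:ℝ) + 1) ^ (1 - β) - (b : ℝ) ^ (1 - β) := by
        have ht1 : 1 / ((b:ℝ) + 1) ≤ 1 := by
          rw [div_le_one hc]; linarith
        have hber := bernoulli_rpow h1β.le (by linarith : 1 - β ≤ 1)
          (by positivity : (0:ℝ) ≤ 1 / ((b:ℝ)+1)) ht1
        have hbeq : (b : ℝ) = ((b:ℝ) + 1) * (1 - 1 / ((b:ℝ)+1)) := by
          field_simp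
          ring
        have h1 : (b : ℝ) ^ (1 - β) = ((b:ℝ) + 1) ^ (1 - β) * (1 - 1 / ((b:ℝ)+1)) ^ (1 - β) := by
          rw [hbeq, Real.mul_rpow hc.le (by linarith)]
          rw [← hbeq]
        have h2 : ((b:ℝ)+1) ^ (1-β) * (1 - 1/((b:ℝ)+1)) ^ (1-β)
            ≤ ((b:ℝ)+1) ^ (1-β) * (1 - (1-β) * (1/((b:ℝ)+1))) :=
          mul_le_mul_of_nonneg_left hber (Real.rpow_nonneg hc.le _)
        have h4 : ((b:ℝ)+1) ^ (1-β) * (1 - (1-β) * (1/((b:ℝ)+1)))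
            = ((b:ℝ)+1) ^ (1-β) - (1-β) * (((b:ℝ)+1) ^ (1-β) / ((b:ℝ)+1)) := by
          ring
        rw [h3]
        rw [h1] at *
        linarith [h2, h4.le, h4.ge]
      have hsum : ∑ j ∈ Finset.Icc 1 (b+1), ((j : ℝ)) ^ (-β)
          = (∑ j ∈ Finset.Icc 1 b, ((j : ℝ)) ^ (-β)) + (((b:ℝ)+1)) ^ (-β) := by
        rw [Finset.sum_Icc_succ_top (by omega : 1 ≤ b + 1)]
        push_cast
        ring_nf
      rw [hsum]
      have hih := ih hb1
      have hcast : ((b+1 : ℕ) : ℝ) = (b:ℝ) + 1 := by push_cast; ring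
      rw [hcast]
      rw [le_div_iff₀ h1β, add_mul]
      have hdm : ((b:ℝ)) ^ (1-β) / (1-β) * (1-β) = ((b:ℝ)) ^ (1-β) := div_mul_cancel₀ _ h1β.ne'
      linarith [mul_le_mul_of_nonneg_right hih h1β.le, hstep]

end PhiRatioAux

set_option maxHeartbeats 4000000 in
/-- Under Assumption 2.3: there exist `C > 0`, `κ₀ ∈ (0,1/4)`, `n₀ ≥ 2`,
depending only on `(A₁, A₂, τ, ν)`, such that for all `n ≥ n₀`, `κ ∈ (0,κ₀]`, and
`(λ, u) ∈ I_κ^{(n),2}`: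
`φ_λ(κu)/φ_λ(u) ≤ φ_λ((1−κ)u)/φ_λ(u) ≤ 1/(1+Cκ)`. -/
theorem phi_ratio_bounds (τ A₁ A₂ ν : ℝ) (θstar : ℕ → ℝ) (w : ℕ → ℕ → ℝ)
    (h23 : Assumption23 τ A₁ A₂ ν θstar w) :
    ∃ C : ℝ, 0 < C ∧ ∃ κ₀ : ℝ, κ₀ ∈ Set.Ioo (0 : ℝ) (1 / 4) ∧ ∃ n₀ : ℕ, 2 ≤ n₀ ∧
      ∀ n : ℕ, n₀ ≤ n → ∀ κ : ℝ, 0 < κ → κ ≤ κ₀ →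
        ∀ lam u : ℝ, 0 ≤ lam → lam ≤ (n : ℝ) ^ etaExp τ / 10 →
          2 * Real.sqrt (sigma2 w n) / (A₁ * κ) ≤ u →
          u ≤ (n : ℝ) ^ alphaExp τ * Real.sqrt (sigma2 w n) / (A₂ * 2 ^ (alphaExp τ + 1)) →
          phiFn τ w n lam (κ * u) / phiFn τ w n lam u ≤
              phiFn τ w n lam ((1 - κ) * u) / phiFn τ w n lam u ∧
            phiFn τ w n lam ((1 - κ) * u) / phiFn τ w n lam u ≤ 1 / (1 + C * κ) := by
  classical
  have hτ3 := h23.tau_gt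
  have hτ4 := h23.tau_lt
  have hA1 := h23.A1_pos
  have hA2 := h23.A2_pos
  have hα0 : 0 < alphaExp τ := by
    unfold alphaExp
    exact div_pos one_pos (by linarith)
  have hα12 : alphaExp τ < 1/2 := by
    unfold alphaExp
    rw [div_lt_div_iff₀ (by linarith) (by norm_num)]
    linarith
  have hα1 : alphaExp τ ≤ 1 := by linarith
  have hηα : etaExp τ = 1 - 2 * alphaExp τ := by
    have hne : τ - 1 ≠ 0 := by intro h; rw [sub_eq_zero] at h; linarith
    unfold etaExp alphaExp
    field_simp
    ring
  have hη0 : 0 < etaExp τ := by rw [hηα]; linarith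
  set Kc : ℝ := 8 * A₂ ^ 3 / (etaExp τ * A₁ ^ 3) with hKcdef
  have hKc0 : 0 < Kc := by rw [hKcdef]; positivity
  set C : ℝ := 2 / (9 * (1 + Kc)) with hCdef
  have hC0 : 0 < C := by rw [hCdef]; positivity
  refine ⟨C, hC0, 1/5, ⟨by norm_num, by norm_num⟩, 100, by norm_num, ?_⟩
  intro n hn κ hκ0 hκ5 lam u hlam0 hlamub hul huu
  set α := alphaExp τ with hαd
  set η := etaExp τ with hηd
  have hn2 : 2 ≤ n := by omega
  have hn0 : (0:ℝ) < (n:ℝ) := by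
    have : 0 < n := by omega
    exact_mod_cast this
  have hP0 : (0:ℝ) < (n:ℝ) ^ α := Real.rpow_pos_of_pos hn0 _
  have hσpos : 0 < sigma2 w n := by
    unfold sigma2
    apply div_pos _ hn0
    apply Finset.sum_pos'
    · intro i _; positivity
    · refine ⟨2, Finset.mem_Icc.2 ⟨le_refl 2, hn2⟩, ?_⟩
      have hw2 := h23.wpos n (by omega) 2 (Finset.mem_Icc.2 ⟨by omega, hn2⟩)
      positivity
  set s := Real.sqrt (sigma2 w n) with hsdef
  have hs0 : 0 < s := Real.sqrt_pos.2 hσpos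
  have hnη : (0:ℝ) < (n:ℝ) ^ η := Real.rpow_pos_of_pos hn0 _
  set m := 1 + lam / (n:ℝ) ^ η with hmdef
  have hm1 : 1 ≤ m := by
    rw [hmdef]
    have : 0 ≤ lam / (n:ℝ) ^ η := div_nonneg hlam0 hnη.le
    linarith
  have hm11 : m ≤ 11/10 := by
    rw [hmdef]
    have h1 : lam / (n:ℝ) ^ η ≤ 1/10 := by
      rw [div_le_iff₀ hnη]
      linarith [hlamub]
    linarith
  set θ : ℕ → ℝ := fun j => thetaSeq τ w n lam j with hθdef
  have hθ_eq : ∀ j, θ j = m * w n j / ((n:ℝ) ^ α * s) := by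
    intro j; rfl
  have hθpos : ∀ j, 1 ≤ j → j ≤ n → 0 < θ j := by
    intro j h1 h2
    have hw := h23.wpos n (by omega) j (Finset.mem_Icc.2 ⟨h1, h2⟩)
    rw [hθ_eq]
    have hm0 : 0 < m := by linarith
    positivity
  have hθmono : ∀ i j : ℕ, 1 ≤ i → i ≤ j → j ≤ n → θ j ≤ θ i := by
    intro i j h1 h2 h3
    rw [hθ_eq, hθ_eq]
    have hm0 : (0:ℝ) < m := by linarith
    have hw := h23.wmono n (by omega) i j h1 h2 h3
    have hD : (0:ℝ) < (n:ℝ) ^ α * s := mul_pos hP0 hs0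
    exact div_le_div_of_nonneg_right (mul_le_mul_of_nonneg_left hw (by linarith : (0:ℝ) ≤ m)) hD.le
  have hθub : ∀ j, 1 ≤ j → 2*j ≤ n → θ j ≤ (11/10) * A₂ / ((j:ℝ) ^ α * s) := by
    intro j h1 h2
    have hj0 : (0:ℝ) < (j:ℝ) := by exact_mod_cast h1
    have hjα : (0:ℝ) < (j:ℝ) ^ α := Real.rpow_pos_of_pos hj0 _
    have hw := h23.wub n hn2 j h1 h2
    have hdiv : ((n:ℝ)/(j:ℝ)) ^ α = (n:ℝ) ^ α / (j:ℝ) ^ α := Real.div_rpow hn0.le (Nat.cast_nonneg j) α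
    rw [hdiv] at hw
    have hw0 := h23.wpos n (by omega) j (Finset.mem_Icc.2 ⟨h1, by omega⟩)
    rw [hθ_eq, div_le_div_iff₀ (mul_pos hP0 hs0) (mul_pos hjα hs0)]
    have hw' : w n j * (j:ℝ) ^ α ≤ A₂ * (n:ℝ) ^ α := by
      calc w n j * (j:ℝ) ^ α ≤ (A₂ * ((n:ℝ) ^ α / (j:ℝ) ^ α)) * (j:ℝ) ^ α :=
            mul_le_mul_of_nonneg_right hw hjα.le
      _ = A₂ * (n:ℝ) ^ α := by field_simp
    have hmw : m * w n j ≤ (11/10) * w n j := mul_le_mul_of_nonneg_right hm11 hw0.le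
    calc m * w n j * ((j:ℝ) ^ α * s) ≤ (11/10) * w n j * ((j:ℝ) ^ α * s) :=
          mul_le_mul_of_nonneg_right hmw (by positivity)
    _ = (11/10) * (w n j * (j:ℝ) ^ α) * s := by ring
    _ ≤ (11/10) * (A₂ * (n:ℝ) ^ α) * s := by
        apply mul_le_mul_of_nonneg_right _ hs0.le
        linarith [hw']
    _ = 11/10 * A₂ * ((n:ℝ) ^ α * s) := by ring
  have hθlb : ∀ j, 1 ≤ j → 2*j ≤ n → A₁ / ((j:ℝ) ^ α * s) ≤ θ j := by
    intro j h1 h2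
    have hj0 : (0:ℝ) < (j:ℝ) := by exact_mod_cast h1
    have hjα : (0:ℝ) < (j:ℝ) ^ α := Real.rpow_pos_of_pos hj0 _
    have hw := h23.wlb n hn2 j h1 h2
    have hdiv : ((n:ℝ)/(j:ℝ)) ^ α = (n:ℝ) ^ α / (j:ℝ) ^ α := Real.div_rpow hn0.le (Nat.cast_nonneg j) α
    rw [hdiv] at hw
    have hw0 := h23.wpos n (by omega) j (Finset.mem_Icc.2 ⟨h1, by omega⟩)
    rw [hθ_eq, div_le_div_iff₀ (mul_pos hjα hs0) (mul_pos hP0 hs0)]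
    have hw' : A₁ * (n:ℝ) ^ α ≤ w n j * (j:ℝ) ^ α := by
      calc A₁ * (n:ℝ) ^ α = (A₁ * ((n:ℝ) ^ α / (j:ℝ) ^ α)) * (j:ℝ) ^ α := by field_simp
      _ ≤ w n j * (j:ℝ) ^ α := mul_le_mul_of_nonneg_right hw hjα.le
    calc A₁ * ((n:ℝ) ^ α * s) = (A₁ * (n:ℝ) ^ α) * s := by ring
    _ ≤ (w n j * (j:ℝ) ^ α) * s := mul_le_mul_of_nonneg_right hw' hs0.le
    _ = (1 * w n j) * ((j:ℝ) ^ α * s) := by ring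
    _ ≤ m * w n j * ((j:ℝ) ^ α * s) := by
        apply mul_le_mul_of_nonneg_right _ (by positivity)
        exact mul_le_mul_of_nonneg_right hm1 hw0.le
  have hu0 : 0 < u := lt_of_lt_of_le (by positivity) hul
  set T := Finset.Icc 2 n with hTdef
  have hphi_eq : ∀ v : ℝ, phiFn τ w n lam v = ∑ j ∈ T, (θ j) ^ 2 * PhiRatioAux.F (v * θ j) := by
    intro v
    unfold phiFn PhiRatioAux.F
    exact Finset.sum_congr rfl (fun j _ => mul_div_assoc _ _ _)
  have hTmem : ∀ j ∈ T, 1 ≤ j ∧ j ≤ n := by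
    intro j hj
    have := Finset.mem_Icc.1 hj
    omega
  have htpos : ∀ j ∈ T, 0 < u * θ j := by
    intro j hj
    obtain ⟨h1, h2⟩ := hTmem j hj
    exact mul_pos hu0 (hθpos j h1 h2)
  have hterm_nonneg : ∀ v : ℝ, 0 < v → ∀ j ∈ T, 0 ≤ (θ j) ^ 2 * PhiRatioAux.F (v * θ j) := by
    intro v hv j hj
    obtain ⟨h1, h2⟩ := hTmem j hj
    have := PhiRatioAux.F_pos (mul_pos hv (hθpos j h1 h2))
    positivity
  have hφu_pos : 0 < phiFn τ w n lam u := by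
    rw [hphi_eq]
    apply Finset.sum_pos' (hterm_nonneg u hu0)
    refine ⟨2, Finset.mem_Icc.2 ⟨le_refl 2, hn2⟩, ?_⟩
    have h2T : (2:ℕ) ∈ T := Finset.mem_Icc.2 ⟨le_refl 2, hn2⟩
    have hθ2 := hθpos 2 (by omega) hn2
    have hF := PhiRatioAux.F_pos (htpos 2 h2T)
    positivity
  clear_value θ s m C Kc
  clear h23 hθ_eq hθdef hmdef hsdef hm1 hm11 hlam0 hlamub hσpos hnη hαd hηd
  have hκ1 : κ ≤ 1/5 := hκ5
  have hmono_phi : phiFn τ w n lam (κ * u) ≤ phiFn τ w n lam ((1-κ) * u) := by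
    rw [hphi_eq, hphi_eq]
    apply Finset.sum_le_sum
    intro j hj
    obtain ⟨hja, hjb⟩ := hTmem j hj
    have hθj := hθpos j hja hjb
    have h1 : 0 < κ * u * θ j := mul_pos (mul_pos hκ0 hu0) hθj
    have h2 : κ * u * θ j ≤ (1-κ) * u * θ j :=
      mul_le_mul_of_nonneg_right (mul_le_mul_of_nonneg_right (by linarith) hu0.le) hθj.le
    have := PhiRatioAux.F_mono h1 h2
    have e1 : κ * u * θ j = (κ * u) * θ j := by ring
    have e2 : (1-κ) * u * θ j = ((1-κ) * u) * θ j := by ring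
    rw [e1, e2] at this
    exact mul_le_mul_of_nonneg_left this (sq_nonneg _)
  -- main gap estimate
  have hmain : C * κ * phiFn τ w n lam u ≤ phiFn τ w n lam u - phiFn τ w n lam ((1-κ) * u) := by
    set S := T.filter (fun j => u * θ j ≤ 2) with hSdef
    set Bs := T.filter (fun j => ¬ (u * θ j ≤ 2)) with hBsdef
    have hSsub : S ⊆ T := Finset.filter_subset _ _
    have hsplit : phiFn τ w n lam u =
        (∑ j ∈ S, (θ j) ^ 2 * PhiRatioAux.F (u * θ j)) +
        (∑ j ∈ Bs, (θ j) ^ 2 * PhiRatioAux.F (u * θ j)) := by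
      rw [hphi_eq]
      exact (Finset.sum_filter_add_sum_filter_not T _ _).symm
    have hSnn : 0 ≤ ∑ j ∈ S, (θ j) ^ 2 * PhiRatioAux.F (u * θ j) :=
      Finset.sum_nonneg (fun j hj => hterm_nonneg u hu0 j (hSsub hj))
    have hmemS : ∀ j : ℕ, j ∈ S ↔ j ∈ T ∧ u * θ j ≤ 2 := fun j => Finset.mem_filter
    have hmemB : ∀ j : ℕ, j ∈ Bs ↔ j ∈ T ∧ ¬ (u * θ j ≤ 2) := fun j => Finset.mem_filter
    have hBsubT : Bs ⊆ T := Finset.filter_subset _ _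
    clear_value S Bs
    have hgap : (2 * κ / 9) * (∑ j ∈ S, (θ j) ^ 2 * PhiRatioAux.F (u * θ j))
        ≤ phiFn τ w n lam u - phiFn τ w n lam ((1-κ) * u) := by
      rw [hphi_eq, hphi_eq, ← Finset.sum_sub_distrib, Finset.mul_sum]
      calc ∑ j ∈ S, (2 * κ / 9) * ((θ j) ^ 2 * PhiRatioAux.F (u * θ j))
          ≤ ∑ j ∈ S, ((θ j) ^ 2 * PhiRatioAux.F (u * θ j)
              - (θ j) ^ 2 * PhiRatioAux.F (((1-κ) * u) * θ j)) := by
            apply Finset.sum_le_sum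
            intro j hj
            obtain ⟨hjT, hjle⟩ := (hmemS j).1 hj
            have ht := htpos j hjT
            have hy0 : 0 < (1-κ) * (u * θ j) := mul_pos (by linarith) ht
            have hyx : (1-κ) * (u * θ j) < u * θ j := by
              have h9 := mul_lt_mul_of_pos_right (show (1-κ) < 1 by linarith) ht
              linarith [h9]
            have hgapj := PhiRatioAux.F_gap hy0 hyx hjle
            have hhalf := PhiRatioAux.F_le_half ht
            have e2 : ((1-κ) * u) * θ j = (1-κ) * (u * θ j) := by ring
            rw [e2]
            linarith [mul_le_mul_of_nonneg_left hgapj (sq_nonneg (θ j)),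
              mul_le_mul_of_nonneg_left
                (mul_le_mul_of_nonneg_left hhalf (sq_nonneg (θ j))) hκ0.le]
      _ ≤ ∑ j ∈ T, ((θ j) ^ 2 * PhiRatioAux.F (u * θ j)
              - (θ j) ^ 2 * PhiRatioAux.F (((1-κ) * u) * θ j)) := by
            apply Finset.sum_le_sum_of_subset_of_nonneg hSsub
            intro j hjT _
            have ht := htpos j hjT
            obtain ⟨hja2, hjb2⟩ := hTmem j hjT
            have hθj2 := hθpos j hja2 hjb2
            have hy0 : 0 < ((1-κ) * u) * θ j := mul_pos (mul_pos (by linarith) hu0) hθj2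
            have hyx : ((1-κ) * u) * θ j ≤ u * θ j :=
              mul_le_mul_of_nonneg_right (by nlinarith [mul_pos hκ0 hu0]) hθj2.le
            have := PhiRatioAux.F_mono hy0 hyx
            linarith [mul_le_mul_of_nonneg_left this (sq_nonneg (θ j))]
    -- the claim: big terms controlled by small terms
    have hclaimB : ∑ j ∈ Bs, (θ j) ^ 2 * PhiRatioAux.F (u * θ j)
        ≤ Kc * ∑ j ∈ S, (θ j) ^ 2 * PhiRatioAux.F (u * θ j) := by
      rcases Finset.eq_empty_or_nonempty Bs with hBe | hBne
      · rw [hBe, Finset.sum_empty]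
        exact mul_nonneg hKc0.le hSnn
      set b := Bs.max' hBne with hbdef
      have hbB : b ∈ Bs := Bs.max'_mem hBne
      have hble : ∀ j ∈ Bs, j ≤ b := fun j hj => Finset.le_max' Bs j hj
      clear_value b
      obtain ⟨hbT, hbgt'⟩ := (hmemB b).1 hbB
      have hbgt : 2 < u * θ b := not_le.1 hbgt'
      obtain ⟨hb2, hbn⟩ := Finset.mem_Icc.1 hbT
      have hafter : ∀ j, b < j → j ≤ n → u * θ j ≤ 2 := by
        intro j hbj hjn
        by_contra hc
        have hjB : j ∈ Bs := (hmemB j).2 ⟨Finset.mem_Icc.2 ⟨by omega, hjn⟩, hc⟩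
        have := hble j hjB
        omega
      have hu_le : u ≤ (n:ℝ) ^ α * s / (2 * A₂) := by
        have h2a : (2:ℝ) ≤ 2 ^ (α+1) := by
          calc (2:ℝ) = 2 ^ (1:ℝ) := (Real.rpow_one 2).symm
          _ ≤ 2 ^ (α+1) := Real.rpow_le_rpow_of_exponent_le one_le_two (by linarith)
        calc u ≤ (n:ℝ) ^ α * s / (A₂ * 2 ^ (α+1)) := huu
        _ ≤ (n:ℝ) ^ α * s / (A₂ * 2) := by
            apply div_le_div_of_nonneg_left (by positivity) (by positivity)
            exact mul_le_mul_of_nonneg_left h2a hA2.le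
        _ = (n:ℝ) ^ α * s / (2 * A₂) := by ring_nf
      have ht_half : ∀ j, j ≤ n → n < 2*j → u * θ j ≤ 2 := by
        intro j hjn h2j
        have hq1 : 1 ≤ n/2 := by omega
        have h2q : 2*(n/2) ≤ n := by omega
        have hqj : n/2 ≤ j := by omega
        have hθq := hθub (n/2) hq1 h2q
        have hmono := hθmono (n/2) j hq1 hqj hjn
        have hq0 : (0:ℝ) < ((n/2 : ℕ):ℝ) := by
          have h0 : 0 < n/2 := hq1
          exact_mod_cast h0
        have hqα : (0:ℝ) < ((n/2:ℕ):ℝ) ^ α := Real.rpow_pos_of_pos hq0 _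
        have h3q : (n:ℝ) ≤ 3 * ((n/2:ℕ):ℝ) := by
          have h0 : n ≤ 3*(n/2) := by omega
          exact_mod_cast h0
        have hnα3 : (n:ℝ) ^ α ≤ 3 * ((n/2:ℕ):ℝ) ^ α := by
          calc (n:ℝ) ^ α ≤ (3 * ((n/2:ℕ):ℝ)) ^ α := Real.rpow_le_rpow hn0.le h3q hα0.le
          _ = 3 ^ α * ((n/2:ℕ):ℝ) ^ α := Real.mul_rpow (by norm_num) hq0.le
          _ ≤ 3 * ((n/2:ℕ):ℝ) ^ α := by
              have h3 : (3:ℝ) ^ α ≤ 3 := by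
                calc (3:ℝ) ^ α ≤ 3 ^ (1:ℝ) :=
                      Real.rpow_le_rpow_of_exponent_le (by norm_num) hα1
                _ = 3 := Real.rpow_one 3
              exact mul_le_mul_of_nonneg_right h3 hqα.le
        have hθq0 : 0 ≤ θ (n/2) := (hθpos (n/2) hq1 (by omega)).le
        calc u * θ j ≤ u * θ (n/2) := mul_le_mul_of_nonneg_left hmono hu0.le
        _ ≤ ((n:ℝ) ^ α * s/(2*A₂)) * ((11/10) * A₂/(((n/2:ℕ):ℝ) ^ α * s)) :=
            mul_le_mul hu_le hθq hθq0 (by positivity)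
        _ = (11/20) * ((n:ℝ) ^ α / ((n/2:ℕ):ℝ) ^ α) := by
            field_simp
            ring
        _ ≤ (11/20) * 3 := by
            apply mul_le_mul_of_nonneg_left _ (by norm_num)
            rw [div_le_iff₀ hqα]
            linarith
        _ ≤ 2 := by norm_num
      have hb_half : 2*b ≤ n := by
        by_contra hc
        push_neg at hc
        have := ht_half b hbn hc
        linarith
      have hb1 : 1 ≤ b := by omega
      have hbr0 : (0:ℝ) < (b:ℝ) := by
        have h0 : 0 < b := by omega
        exact_mod_cast h0
      have hbα : (0:ℝ) < (b:ℝ) ^ α := Real.rpow_pos_of_pos hbr0 _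
      have hθb := hθub b hb1 hb_half
      have hu20 : 20 * (b:ℝ) ^ α * s < 11 * A₂ * u := by
        have h1 : 2 < u * ((11/10) * A₂/((b:ℝ) ^ α * s)) :=
          lt_of_lt_of_le hbgt (mul_le_mul_of_nonneg_left hθb hu0.le)
        have hD : (0:ℝ) < (b:ℝ) ^ α * s := mul_pos hbα hs0
        have h2 := mul_lt_mul_of_pos_right h1 hD
        have e : u * ((11/10) * A₂/((b:ℝ) ^ α * s)) * ((b:ℝ) ^ α * s) = 11/10 * A₂ * u := by
          field_simp
        rw [e] at h2
        linarith [h2]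
      have hb40 : (b:ℝ) ^ α < (11/40) * (n:ℝ) ^ α := by
        have h2 : 11 * A₂ * u ≤ 11 * A₂ * ((n:ℝ) ^ α * s/(2*A₂)) :=
          mul_le_mul_of_nonneg_left hu_le (by positivity)
        have h3 : 11 * A₂ * ((n:ℝ) ^ α * s/(2*A₂)) = (11/2) * ((n:ℝ) ^ α * s) := by
          field_simp
        rw [h3] at h2
        have h4 := lt_of_lt_of_le hu20 h2
        have h5 : 20 * (b:ℝ) ^ α < (11/2) * (n:ℝ) ^ α := by
          apply lt_of_mul_lt_mul_right _ hs0.le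
          calc 20 * (b:ℝ) ^ α * s < 11/2 * ((n:ℝ) ^ α * s) := h4
          _ = (11/2) * (n:ℝ) ^ α * s := by ring
        linarith
      have h6α : (6:ℝ) ^ α ≤ 5/2 := by
        have hs6 : Real.sqrt 6 ≤ 5/2 := by
          have h0 : Real.sqrt 6 ≤ Real.sqrt ((5/2)^2) := Real.sqrt_le_sqrt (by norm_num)
          rwa [Real.sqrt_sq (by norm_num : (0:ℝ) ≤ 5/2)] at h0
        calc (6:ℝ) ^ α ≤ 6 ^ ((1:ℝ)/2) :=
              Real.rpow_le_rpow_of_exponent_le (by norm_num) (by linarith)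
        _ = Real.sqrt 6 := by rw [Real.sqrt_eq_rpow]
        _ ≤ 5/2 := hs6
      have hbα_lt : (b:ℝ) ^ α < ((n:ℝ)/6) ^ α := by
        have hn6 : ((n:ℝ)/6) ^ α = (n:ℝ) ^ α/(6:ℝ) ^ α :=
          Real.div_rpow hn0.le (by norm_num) α
        rw [hn6, lt_div_iff₀ (by positivity : (0:ℝ) < (6:ℝ) ^ α)]
        have p1 : (b:ℝ) ^ α * (6:ℝ) ^ α ≤ (b:ℝ) ^ α * (5/2) :=
          mul_le_mul_of_nonneg_left h6α hbα.le
        linarith [hP0, hb40]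
      have hb6 : 6*b ≤ n := by
        by_contra hc
        push_neg at hc
        have h1 : ((n:ℝ)/6) ≤ (b:ℝ) := by
          rw [div_le_iff₀ (by norm_num : (0:ℝ) < 6)]
          have h0 : (n:ℝ) ≤ 6*(b:ℝ) := by exact_mod_cast (by omega : n ≤ 6*b)
          linarith
        have := Real.rpow_le_rpow (by positivity) h1 hα0.le
        linarith
      have h2α0 : 0 < 2*α := by linarith
      have h2α1 : 2*α < 1 := by linarith
      have hBsub : Bs ⊆ Finset.Icc 2 b := by
        intro j hj
        have hjT := hBsubT hj
        exact Finset.mem_Icc.2 ⟨(Finset.mem_Icc.1 hjT).1, hble j hj⟩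
      have hBbound : ∑ j ∈ Bs, (θ j)^2 * PhiRatioAux.F (u * θ j)
          ≤ 121/100 * A₂^2/s^2 * ((b:ℝ)^η/η) := by
        have step1 : ∑ j ∈ Bs, (θ j)^2 * PhiRatioAux.F (u * θ j) ≤ ∑ j ∈ Bs, (θ j)^2 := by
          apply Finset.sum_le_sum
          intro j hj
          have hjT := hBsubT hj
          have h1 := PhiRatioAux.F_le_one (htpos j hjT)
          exact mul_le_of_le_one_right (sq_nonneg _) h1
        have step2 : ∑ j ∈ Bs, (θ j)^2 ≤ ∑ j ∈ Finset.Icc 2 b, (θ j)^2 :=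
          Finset.sum_le_sum_of_subset_of_nonneg hBsub (fun j _ _ => sq_nonneg _)
        have step3 : ∑ j ∈ Finset.Icc 2 b, (θ j)^2
            ≤ ∑ j ∈ Finset.Icc 2 b, (121/100 * A₂^2/s^2) * ((j:ℝ)) ^ (-(2*α)) := by
          apply Finset.sum_le_sum
          intro j hj
          obtain ⟨hj2, hjb⟩ := Finset.mem_Icc.1 hj
          have hj1 : 1 ≤ j := by omega
          have hjn2 : 2*j ≤ n := by omega
          have hju := hθub j hj1 hjn2
          have hθj0 := (hθpos j hj1 (by omega)).le
          have hj0 : (0:ℝ) < (j:ℝ) := by exact_mod_cast hj1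
          have hjα : (0:ℝ) < (j:ℝ) ^ α := Real.rpow_pos_of_pos hj0 _
          have hsq : ((j:ℝ) ^ α)^2 = (j:ℝ) ^ (2*α) := by
            rw [← Real.rpow_natCast ((j:ℝ) ^ α) 2, ← Real.rpow_mul hj0.le]
            norm_num
            ring_nf
          have he : (11/10 * A₂/((j:ℝ) ^ α * s))^2
              = (121/100 * A₂^2/s^2) * ((j:ℝ)) ^ (-(2*α)) := by
            rw [Real.rpow_neg hj0.le, ← hsq]
            field_simp
            ring
          calc (θ j)^2 ≤ (11/10 * A₂/((j:ℝ) ^ α * s))^2 := pow_le_pow_left₀ hθj0 hju 2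
          _ = (121/100 * A₂^2/s^2) * ((j:ℝ)) ^ (-(2*α)) := he
        have step4 : ∑ j ∈ Finset.Icc 2 b, (121/100 * A₂^2/s^2) * ((j:ℝ)) ^ (-(2*α))
            ≤ ∑ j ∈ Finset.Icc 1 b, (121/100 * A₂^2/s^2) * ((j:ℝ)) ^ (-(2*α)) := by
          apply Finset.sum_le_sum_of_subset_of_nonneg
          · intro j hj
            have := Finset.mem_Icc.1 hj
            exact Finset.mem_Icc.2 ⟨by omega, by omega⟩
          · intro j hj _
            have hj1 : 1 ≤ j := (Finset.mem_Icc.1 hj).1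
            have hj0 : (0:ℝ) < (j:ℝ) := by exact_mod_cast hj1
            positivity
        have step5 := PhiRatioAux.sum_rpow_neg_le h2α0 h2α1 b hb1
        calc ∑ j ∈ Bs, (θ j)^2 * PhiRatioAux.F (u * θ j)
            ≤ ∑ j ∈ Finset.Icc 1 b, (121/100 * A₂^2/s^2) * ((j:ℝ)) ^ (-(2*α)) :=
              le_trans step1 (le_trans step2 (le_trans step3 step4))
        _ = (121/100 * A₂^2/s^2) * ∑ j ∈ Finset.Icc 1 b, ((j:ℝ)) ^ (-(2*α)) := by
              rw [Finset.mul_sum]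
        _ ≤ (121/100 * A₂^2/s^2) * ((b:ℝ) ^ (1-2*α)/(1-2*α)) :=
              mul_le_mul_of_nonneg_left step5 (by positivity)
        _ = 121/100 * A₂^2/s^2 * ((b:ℝ)^η/η) := by rw [hηα]
      set R := Finset.Icc (b+1) (3*b) with hRdef
      have hRsub : R ⊆ S := by
        intro j hj
        obtain ⟨hj1, hj2⟩ := Finset.mem_Icc.1 hj
        exact (hmemS j).2 ⟨Finset.mem_Icc.2 ⟨by omega, by omega⟩,
          hafter j (by omega) (by omega)⟩
      have hcard : R.card = 2*b := by
        rw [hRdef, Nat.card_Icc]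
        omega
      have h3b0 : (0:ℝ) < 3*(b:ℝ) := by linarith
      have h3bα : (0:ℝ) < (3*(b:ℝ)) ^ α := Real.rpow_pos_of_pos h3b0 _
      set lw : ℝ := (A₁/((3*(b:ℝ)) ^ α * s))^3 * u/4 with hlwdef
      have hterm : ∀ j ∈ R, lw ≤ (θ j)^2 * PhiRatioAux.F (u * θ j) := by
        intro j hj
        obtain ⟨hj1, hj2⟩ := Finset.mem_Icc.1 hj
        have hj1' : 1 ≤ j := by omega
        have hjn2 : 2*j ≤ n := by omega
        have hjn : j ≤ n := by omega
        have hθl := hθlb j hj1' hjn2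
        have hj0 : (0:ℝ) < (j:ℝ) := by exact_mod_cast hj1'
        have hjα : (0:ℝ) < (j:ℝ) ^ α := Real.rpow_pos_of_pos hj0 _
        have hj3b : (j:ℝ) ≤ 3*(b:ℝ) := by exact_mod_cast (by omega : j ≤ 3*b)
        have hjα3b : (j:ℝ) ^ α ≤ (3*(b:ℝ)) ^ α := Real.rpow_le_rpow hj0.le hj3b hα0.le
        have hθlow : A₁/((3*(b:ℝ)) ^ α * s) ≤ θ j := by
          refine le_trans ?_ hθl
          apply div_le_div_of_nonneg_left hA1.le (mul_pos hjα hs0)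
          exact mul_le_mul_of_nonneg_right hjα3b hs0.le
        have hθj := hθpos j hj1' hjn
        have htj : 0 < u * θ j := mul_pos hu0 hθj
        have htj2 : u * θ j ≤ 2 := hafter j (by omega) hjn
        have hF := PhiRatioAux.quarter_le_F htj htj2
        have hcube : (A₁/((3*(b:ℝ)) ^ α * s))^3 ≤ (θ j)^3 :=
          pow_le_pow_left₀ (by positivity) hθlow 3
        calc lw = (A₁/((3*(b:ℝ)) ^ α * s))^3 * u/4 := hlwdef
        _ ≤ (θ j)^3 * u/4 := by
            apply div_le_div_of_nonneg_right ?_ (by norm_num)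
            exact mul_le_mul_of_nonneg_right hcube hu0.le
        _ = (θ j)^2 * (u * θ j/4) := by ring
        _ ≤ (θ j)^2 * PhiRatioAux.F (u * θ j) := by
            apply mul_le_mul_of_nonneg_left _ (sq_nonneg _)
            linarith
      have hlw0 : 0 ≤ lw := by
        rw [hlwdef]
        positivity
      have hSlow : (2*(b:ℝ)) * lw ≤ ∑ j ∈ S, (θ j)^2 * PhiRatioAux.F (u * θ j) := by
        have h1 := Finset.card_nsmul_le_sum R _ _ hterm
        rw [hcard] at h1
        have h2 : ∑ j ∈ R, (θ j)^2 * PhiRatioAux.F (u * θ j)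
            ≤ ∑ j ∈ S, (θ j)^2 * PhiRatioAux.F (u * θ j) :=
          Finset.sum_le_sum_of_subset_of_nonneg hRsub
            (fun j hj _ => hterm_nonneg u hu0 j (hSsub hj))
        calc (2*(b:ℝ)) * lw = ((2*b : ℕ):ℝ) * lw := by push_cast; ring
        _ = (2*b) • lw := (nsmul_eq_mul _ _).symm
        _ ≤ ∑ j ∈ R, (θ j)^2 * PhiRatioAux.F (u * θ j) := h1
        _ ≤ _ := h2
      -- final arithmetic
      have hX0 : (0:ℝ) < (b:ℝ)^η := Real.rpow_pos_of_pos hbr0 _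
      have hd0 : (0:ℝ) < (3:ℝ) ^ α := Real.rpow_pos_of_pos (by norm_num) _
      have i1 : (3*(b:ℝ)) ^ α = (3:ℝ) ^ α * (b:ℝ) ^ α := Real.mul_rpow (by norm_num) hbr0.le
      have icube : ((b:ℝ) ^ α)^3 = (b:ℝ) ^ (3*α) := by
        rw [← Real.rpow_natCast ((b:ℝ) ^ α) 3, ← Real.rpow_mul hbr0.le]
        norm_num
        ring_nf
      have i2 : (b:ℝ) * (b:ℝ) ^ α = (b:ℝ)^η * ((b:ℝ) ^ α)^3 := by
        rw [icube]
        nth_rewrite 1 [show (b:ℝ) = (b:ℝ) ^ (1:ℝ) from (Real.rpow_one _).symm]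
        rw [← Real.rpow_add hbr0, ← Real.rpow_add hbr0]
        congr 1
        rw [hηα]
        ring
      have id3 : ((3:ℝ) ^ α)^3 ≤ 21/4 := by
        have h1 : ((3:ℝ) ^ α)^3 = (3:ℝ) ^ (3*α) := by
          rw [← Real.rpow_natCast ((3:ℝ) ^ α) 3, ← Real.rpow_mul (by norm_num : (0:ℝ) ≤ 3)]
          norm_num
          ring_nf
        have h2 : (3:ℝ) ^ (3*α) ≤ (3:ℝ) ^ ((3:ℝ)/2) :=
          Real.rpow_le_rpow_of_exponent_le (by norm_num) (by linarith)
        have h3 : (3:ℝ) ^ ((3:ℝ)/2) = 3 * Real.sqrt 3 := by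
          rw [show (3:ℝ)/2 = 1 + 1/(2:ℝ) by norm_num, Real.rpow_add (by norm_num),
            Real.rpow_one, Real.sqrt_eq_rpow]
        have h4 : Real.sqrt 3 ≤ 7/4 := by
          have h0 : Real.sqrt 3 ≤ Real.sqrt ((7/4)^2) := Real.sqrt_le_sqrt (by norm_num)
          rwa [Real.sqrt_sq (by norm_num : (0:ℝ) ≤ 7/4)] at h0
        rw [h1]
        calc (3:ℝ) ^ (3*α) ≤ (3:ℝ) ^ ((3:ℝ)/2) := h2
        _ = 3 * Real.sqrt 3 := h3
        _ ≤ 21/4 := by linarith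
      have hu0' : 20 * (b:ℝ) ^ α * s/(11*A₂) ≤ u := by
        rw [div_le_iff₀ (by positivity)]
        linarith [hu20]
      have hfinal : 121/100 * A₂^2/s^2 * ((b:ℝ)^η/η) ≤ Kc * ((2*(b:ℝ)) * lw) := by
        have hlw_ge : (A₁/((3:ℝ) ^ α * (b:ℝ) ^ α * s))^3 * (20 * (b:ℝ) ^ α * s/(11*A₂))/4 ≤ lw := by
          rw [hlwdef, i1]
          apply div_le_div_of_nonneg_right ?_ (by norm_num)
          exact mul_le_mul_of_nonneg_left hu0' (by positivity)
        have hmid : Kc * ((2*(b:ℝ)) * ((A₁/((3:ℝ) ^ α * (b:ℝ) ^ α * s))^3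
              * (20 * (b:ℝ) ^ α * s/(11*A₂))/4))
            ≤ Kc * ((2*(b:ℝ)) * lw) := by
          apply mul_le_mul_of_nonneg_left _ hKc0.le
          exact mul_le_mul_of_nonneg_left hlw_ge (by positivity)
        refine le_trans ?_ hmid
        have e0 : (2*(b:ℝ)) * ((A₁/((3:ℝ) ^ α * (b:ℝ) ^ α * s))^3
              * (20 * (b:ℝ) ^ α * s/(11*A₂))/4)
            = ((b:ℝ) * (b:ℝ) ^ α) * (10*A₁^3/(11*A₂*((3:ℝ) ^ α)^3*((b:ℝ) ^ α)^3*s^2)) := by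
          field_simp
          ring
        have e1 : ((b:ℝ)^η * ((b:ℝ) ^ α)^3) * (10*A₁^3/(11*A₂*((3:ℝ) ^ α)^3*((b:ℝ) ^ α)^3*s^2))
            = (b:ℝ)^η * (10*A₁^3/(11*A₂*((3:ℝ) ^ α)^3*s^2)) := by
          field_simp
        rw [e0, i2, e1, hKcdef]
        have eL : 121/100 * A₂^2/s^2 * ((b:ℝ)^η/η) = (121*A₂^2*(b:ℝ)^η) / (100*s^2*η) := by
          field_simp
          try ring
        have eR : (8 * A₂ ^ 3 / (η * A₁ ^ 3)) * ((b:ℝ)^η * (10*A₁^3/(11*A₂*((3:ℝ) ^ α)^3*s^2)))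
            = (80*A₂^2*(b:ℝ)^η) / (11*η*((3:ℝ) ^ α)^3*s^2) := by
          field_simp
          ring
        rw [eL, eR, div_le_div_iff₀ (by positivity) (by positivity)]
        linarith [mul_le_mul_of_nonneg_left id3
          (by positivity : (0:ℝ) ≤ A₂^2*(b:ℝ)^η*η*s^2),
          (by positivity : (0:ℝ) ≤ A₂^2*(b:ℝ)^η*η*s^2)]
      calc ∑ j ∈ Bs, (θ j)^2 * PhiRatioAux.F (u * θ j)
          ≤ 121/100 * A₂^2/s^2 * ((b:ℝ)^η/η) := hBbound
      _ ≤ Kc * ((2*(b:ℝ)) * lw) := hfinal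
      _ ≤ Kc * ∑ j ∈ S, (θ j)^2 * PhiRatioAux.F (u * θ j) :=
          mul_le_mul_of_nonneg_left hSlow hKc0.le

    have hφ_le : phiFn τ w n lam u ≤ (1 + Kc) * ∑ j ∈ S, (θ j) ^ 2 * PhiRatioAux.F (u * θ j) := by
      rw [hsplit]; linarith
    have hCk : C * (1 + Kc) = 2/9 := by
      rw [hCdef]; field_simp
    calc C * κ * phiFn τ w n lam u
        ≤ C * κ * ((1 + Kc) * ∑ j ∈ S, (θ j) ^ 2 * PhiRatioAux.F (u * θ j)) := by
          apply mul_le_mul_of_nonneg_left hφ_le (by positivity)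
    _ = (C * (1 + Kc)) * (κ * ∑ j ∈ S, (θ j) ^ 2 * PhiRatioAux.F (u * θ j)) := by ring
    _ = (2 * κ / 9) * ∑ j ∈ S, (θ j) ^ 2 * PhiRatioAux.F (u * θ j) := by rw [hCk]; ring
    _ ≤ phiFn τ w n lam u - phiFn τ w n lam ((1-κ) * u) := hgap
  constructor
  · exact div_le_div_of_nonneg_right hmono_phi hφu_pos.le
  · have hφ1_nonneg : 0 ≤ phiFn τ w n lam ((1-κ) * u) := by
      rw [hphi_eq]
      apply Finset.sum_nonneg
      intro j hj
      exact hterm_nonneg ((1-κ)*u) (mul_pos (by linarith) hu0) j hj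
    have h1C : 0 < 1 + C * κ := by positivity
    rw [div_le_div_iff₀ hφu_pos h1C]
    have hφ1_le : phiFn τ w n lam ((1-κ) * u) ≤ phiFn τ w n lam u := by
      linarith [hmain, mul_pos (mul_pos hC0 hκ0) hφu_pos]
    linarith [hmain, mul_le_mul_of_nonneg_left hφ1_le (by positivity : (0:ℝ) ≤ C * κ)]


end
end
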